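/- arXiv:2504.19172 — 5 statements merged into one kernel-verified Lean document; each statement's English description precedes it below -/
import Mathlib

section
/- Let (𝓕_n)_{n≥0} be a filtration and (Y_n)_{n≥1} a sequence of square-integrable random variables with Y_n measurable with respect to 𝓕_n. If the random series ∑_{m=1}^∞ E(Y_m | 𝓕_{m-1}) and ∑_{m=1}^∞ E(Y_m² | 𝓕_{m-1}) both converge almost surely, then ∑_{n=1}^∞ Y_n converges almost surely. -/
open MeasureTheory Filter
open scoped BigOperators

private lemma mul_integrable_of_memL2 {Ω : Type*} {m0 : MeasurableSpace Ω} {P : Measure Ω}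
    {f g : Ω → ℝ} (hf : MemLp f 2 P) (hg : MemLp g 2 P) :
    Integrable (fun ω => f ω * g ω) P := by
  refine Integrable.mono' ((hf.integrable_sq.add hg.integrable_sq).div_const 2)
    (hf.aestronglyMeasurable.mul hg.aestronglyMeasurable) (Eventually.of_forall fun ω => ?_)
  have h := two_mul_le_add_sq (|f ω|) (|g ω|)
  rw [Real.norm_eq_abs, abs_mul]
  simp only [sq_abs] at h
  simp only [Pi.add_apply]
  nlinarith [abs_nonneg (f ω), abs_nonneg (g ω)]

private lemma aux_conv {Ω : Type*} {m0 : MeasurableSpace Ω} {P : Measure Ω} [IsProbabilityMeasure P]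
    (𝓕 : Filtration ℕ m0) (X b : ℕ → Ω → ℝ) (K : ℕ)
    (hXm : ∀ n, StronglyMeasurable[𝓕 (n + 1)] (X n))
    (hXL2 : ∀ n, MemLp (X n) 2 P)
    (hXc : ∀ n, P[X n|𝓕 n] =ᵐ[P] 0)
    (hbm : ∀ n, StronglyMeasurable[𝓕 n] (b n))
    (hbi : ∀ n, Integrable (b n) P)
    (hXv : ∀ n, P[(fun ω => X n ω ^ 2)|𝓕 n] ≤ᵐ[P] b n) :
    ∀ᵐ ω ∂P, (∀ N, ∑ m ∈ Finset.range N, b m ω ≤ (K : ℝ)) →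
      ∃ c, Tendsto (fun N => ∑ m ∈ Finset.range N, X m ω) atTop (nhds c) := by
  classical
  set C : ℕ → Set Ω := fun m => {ω | ∀ k ≤ m, ∑ j ∈ Finset.range (k + 1), b j ω ≤ (K : ℝ)}
    with hCdef
  have hXi : ∀ n, Integrable (X n) P := fun n => (hXL2 n).integrable one_le_two
  have hCmeas : ∀ m, MeasurableSet[𝓕 m] (C m) := by
    intro m
    have hEq : C m = ⋂ k ∈ Finset.range (m + 1),
        {ω | ∑ j ∈ Finset.range (k + 1), b j ω ≤ (K : ℝ)} := by
      ext ω; simp [hCdef, Nat.lt_succ_iff]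
    rw [hEq]
    refine MeasurableSet.biInter (Finset.range (m + 1)).countable_toSet fun k hk => ?_
    have hksm : StronglyMeasurable[𝓕 m] fun ω => ∑ j ∈ Finset.range (k + 1), b j ω :=
      Finset.stronglyMeasurable_fun_sum _ fun j hj => (hbm j).mono (𝓕.mono (by
        simp only [Finset.mem_range] at hj
        have hk' : k < m + 1 := Finset.mem_range.1 (Finset.mem_coe.1 hk)
        omega))
    exact measurableSet_le hksm.measurable measurable_const
  have hCm0 : ∀ m, MeasurableSet (C m) := fun m => 𝓕.le m _ (hCmeas m)
  set Z : ℕ → Ω → ℝ := fun m => (C m).indicator (X m) with hZdef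
  set F : ℕ → Ω → ℝ := fun N ω => ∑ m ∈ Finset.range N, Z m ω with hFdef
  have hZm : ∀ m, StronglyMeasurable[𝓕 (m + 1)] (Z m) := fun m =>
    (hXm m).indicator ((𝓕.mono m.le_succ) _ (hCmeas m))
  have hZL2 : ∀ m, MemLp (Z m) 2 P := fun m => (hXL2 m).indicator (hCm0 m)
  have hZi : ∀ m, Integrable (Z m) P := fun m => (hZL2 m).integrable one_le_two
  have hFm : ∀ N, StronglyMeasurable[𝓕 N] (F N) := fun N =>
    Finset.stronglyMeasurable_fun_sum _ fun m hm =>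
      (hZm m).mono (𝓕.mono (Finset.mem_range.1 hm))
  have hFL2 : ∀ N, MemLp (F N) 2 P := fun N => memLp_finsetSum _ fun m _ => hZL2 m
  have hFi : ∀ N, Integrable (F N) P := fun N => (hFL2 N).integrable one_le_two
  have hZc : ∀ n, P[Z n|𝓕 n] =ᵐ[P] 0 := by
    intro n
    refine (condExp_indicator (hXi n) (hCmeas n)).trans ?_
    filter_upwards [hXc n] with ω hω
    by_cases h : ω ∈ C n
    · simp [Set.indicator_of_mem h, hω]
    · simp [Set.indicator_of_notMem h]
  have hmart : Martingale F 𝓕 P := by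
    refine martingale_nat hFm hFi fun n => ?_
    have hsucc : F (n + 1) = (F n) + (Z n) := by
      funext ω; simp [hFdef, Finset.sum_range_succ]
    rw [hsucc]
    have h1 : P[F n + Z n|𝓕 n] =ᵐ[P] P[F n|𝓕 n] + P[Z n|𝓕 n] := condExp_add (hFi n) (hZi n) _
    have h2 : P[F n|𝓕 n] = F n := condExp_of_stronglyMeasurable (𝓕.le n) (hFm n) (hFi n)
    refine EventuallyEq.symm (h1.trans ?_)
    rw [h2]
    filter_upwards [hZc n] with ω hω
    simp [hω]
  -- cross terms vanish
  have hcross : ∀ N, ∫ ω, F N ω * Z N ω ∂P = 0 := by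
    intro N
    have hint : Integrable (fun ω => F N ω * Z N ω) P :=
      mul_integrable_of_memL2 (hFL2 N) (hZL2 N)
    have hint' : Integrable (F N * Z N) P := hint
    have hpull : P[F N * Z N|𝓕 N] =ᵐ[P] F N * P[Z N|𝓕 N] :=
      condExp_mul_of_stronglyMeasurable_left (hFm N) hint' (hZi N)
    have hz : (F N * P[Z N|𝓕 N] : Ω → ℝ) =ᵐ[P] 0 := by
      filter_upwards [hZc N] with ω hω
      simp [hω]
    calc ∫ ω, F N ω * Z N ω ∂P = ∫ ω, (P[F N * Z N|𝓕 N]) ω ∂P :=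
          (integral_condExp (𝓕.le N)).symm
      _ = ∫ ω, (0 : Ω → ℝ) ω ∂P := integral_congr_ae (hpull.trans hz)
      _ = 0 := by simp
  have hZsq : ∀ N, ∫ ω, Z N ω ^ 2 ∂P ≤ ∫ ω, (C N).indicator (b N) ω ∂P := by
    intro N
    have heq : (fun ω => Z N ω ^ 2) = (C N).indicator (fun ω => X N ω ^ 2) := by
      funext ω
      by_cases h : ω ∈ C N
      · simp [hZdef, Set.indicator_of_mem h]
      · simp [hZdef, Set.indicator_of_notMem h]
    have hX2i : Integrable (fun ω => X N ω ^ 2) P := (hXL2 N).integrable_sq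
    rw [heq]
    calc ∫ ω, (C N).indicator (fun ω => X N ω ^ 2) ω ∂P
        = ∫ ω, (P[(C N).indicator (fun ω => X N ω ^ 2)|𝓕 N]) ω ∂P :=
          (integral_condExp (𝓕.le N)).symm
      _ = ∫ ω, (C N).indicator (P[(fun ω => X N ω ^ 2)|𝓕 N]) ω ∂P :=
          integral_congr_ae (condExp_indicator hX2i (hCmeas N))
      _ ≤ ∫ ω, (C N).indicator (b N) ω ∂P := by
          refine integral_mono_ae (integrable_condExp.indicator (hCm0 N))
            ((hbi N).indicator (hCm0 N)) ?_
          filter_upwards [hXv N] with ω hω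
          exact Set.indicator_le_indicator hω
  have hFsq : ∀ N, ∫ ω, F N ω ^ 2 ∂P ≤
      ∑ m ∈ Finset.range N, ∫ ω, (C m).indicator (b m) ω ∂P := by
    intro N
    induction N with
    | zero => simp [hFdef]
    | succ N ih =>
      have i1 : Integrable (fun ω => F N ω ^ 2) P := (hFL2 N).integrable_sq
      have i2 : Integrable (fun ω => F N ω * Z N ω) P :=
        mul_integrable_of_memL2 (hFL2 N) (hZL2 N)
      have i3 : Integrable (fun ω => Z N ω ^ 2) P := (hZL2 N).integrable_sq
      have hexp : (fun ω => F (N + 1) ω ^ 2) =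
          fun ω => F N ω ^ 2 + (2 * (F N ω * Z N ω) + Z N ω ^ 2) := by
        funext ω
        simp only [hFdef, Finset.sum_range_succ]
        ring
      have i2' : Integrable (fun ω => 2 * (F N ω * Z N ω)) P := by exact i2.const_mul 2
      have i23 : Integrable (fun ω => 2 * (F N ω * Z N ω) + Z N ω ^ 2) P := by
        exact i2'.add i3
      rw [hexp, Finset.sum_range_succ]
      rw [integral_add i1 i23, integral_add i2' i3, integral_const_mul, hcross N]
      have := hZsq N
      linarith
  have hbound : ∀ N, ∫ ω, F N ω ^ 2 ∂P ≤ (K : ℝ) := by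
    intro N
    refine (hFsq N).trans ?_
    have hptw : ∀ ω, ∑ m ∈ Finset.range N, (C m).indicator (b m) ω ≤ (K : ℝ) := by
      intro ω
      induction N with
      | zero => simp
      | succ N ih =>
        by_cases h : ω ∈ C N
        · have hall : ∀ m ∈ Finset.range (N + 1), (C m).indicator (b m) ω = b m ω := by
            intro m hm
            have hmN : m ≤ N := Nat.lt_succ_iff.1 (Finset.mem_range.1 hm)
            have hωm : ω ∈ C m := fun k hk => h k (hk.trans hmN)
            exact Set.indicator_of_mem hωm _
          calc ∑ m ∈ Finset.range (N + 1), (C m).indicator (b m) ω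
              = ∑ m ∈ Finset.range (N + 1), b m ω := Finset.sum_congr rfl hall
            _ ≤ (K : ℝ) := h N le_rfl
        · rw [Finset.sum_range_succ, Set.indicator_of_notMem h, add_zero]
          exact ih
    have hints : ∀ m ∈ Finset.range N, Integrable ((C m).indicator (b m)) P :=
      fun m _ => (hbi m).indicator (hCm0 m)
    rw [← integral_finset_sum _ hints]
    calc ∫ ω, ∑ m ∈ Finset.range N, (C m).indicator (b m) ω ∂P
        ≤ ∫ _ω, (K : ℝ) ∂P :=
          integral_mono (integrable_finset_sum _ hints) (integrable_const _) hptw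
      _ = (K : ℝ) := by simp
  have hnorm1 : ∀ N, eLpNorm (F N) 1 P ≤ ENNReal.ofReal (Real.sqrt (K : ℝ)) := by
    intro N
    refine (eLpNorm_le_eLpNorm_of_exponent_le one_le_two
      (hFL2 N).aestronglyMeasurable).trans ?_
    rw [(hFL2 N).eLpNorm_eq_integral_rpow_norm two_ne_zero ENNReal.ofNat_ne_top]
    refine ENNReal.ofReal_le_ofReal ?_
    have h2 : ((2 : ENNReal)).toReal = (2 : ℝ) := by norm_num
    rw [h2]
    have hi : (∫ a, ‖F N a‖ ^ (2 : ℝ) ∂P) = ∫ a, F N a ^ 2 ∂P := by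
      refine integral_congr_ae (Eventually.of_forall fun a => ?_)
      show ‖F N a‖ ^ (2 : ℝ) = F N a ^ 2
      rw [Real.norm_eq_abs, show (2 : ℝ) = ((2 : ℕ) : ℝ) by norm_num,
        Real.rpow_natCast, sq_abs]
    rw [hi]
    have hnn : 0 ≤ ∫ a, F N a ^ 2 ∂P := integral_nonneg fun a => sq_nonneg _
    rw [Real.sqrt_eq_rpow, show (1 / 2 : ℝ) = (2 : ℝ)⁻¹ by norm_num]
    exact Real.rpow_le_rpow hnn (hbound N) (by norm_num)
  have hRcoe : ENNReal.ofReal (Real.sqrt (K : ℝ))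
      = ((Real.sqrt (K : ℝ)).toNNReal : ENNReal) := rfl
  have hconv := hmart.submartingale.exists_ae_tendsto_of_bdd
    (R := (Real.sqrt (K : ℝ)).toNNReal) fun N => by rw [← hRcoe]; exact hnorm1 N
  filter_upwards [hconv] with ω hω hB
  obtain ⟨c, hc⟩ := hω
  refine ⟨c, ?_⟩
  have hmem : ∀ m, ω ∈ C m := fun m k _hk => hB (k + 1)
  have heq : ∀ N, F N ω = ∑ m ∈ Finset.range N, X m ω := fun N =>
    Finset.sum_congr rfl fun m _ => Set.indicator_of_mem (hmem m) _
  exact hc.congr heq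

theorem series_convergence_from_conditional_series
    {Ω : Type*} {m0 : MeasurableSpace Ω} {P : Measure Ω} [IsProbabilityMeasure P]
    (𝓕 : Filtration ℕ m0) (Y : ℕ → Ω → ℝ)
    (hmeas : ∀ n, 1 ≤ n → StronglyMeasurable[𝓕 n] (Y n))
    (hL2 : ∀ n, 1 ≤ n → MemLp (Y n) 2 P)
    (h1 : ∀ᵐ ω ∂P, ∃ l : ℝ, Tendsto
      (fun N => ∑ m ∈ Finset.range N, (P[Y (m + 1)|𝓕 m]) ω) atTop (nhds l))
    (h2 : ∀ᵐ ω ∂P, ∃ l : ℝ, Tendsto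
      (fun N => ∑ m ∈ Finset.range N, (P[(fun ω => (Y (m + 1) ω) ^ 2)|𝓕 m]) ω) atTop (nhds l)) :
    ∀ᵐ ω ∂P, ∃ l : ℝ, Tendsto (fun N => ∑ m ∈ Finset.range N, Y (m + 1) ω) atTop (nhds l) := by
  classical
  set g : ℕ → Ω → ℝ := fun n => P[Y (n + 1)|𝓕 n] with hgdef
  set b : ℕ → Ω → ℝ := fun n => P[(fun ω => (Y (n + 1) ω) ^ 2)|𝓕 n] with hbdef
  set X : ℕ → Ω → ℝ := fun n => Y (n + 1) - g n with hXdef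
  have hYL2 : ∀ n, MemLp (Y (n + 1)) 2 P := fun n => hL2 (n + 1) (Nat.le_add_left 1 n)
  have hYi : ∀ n, Integrable (Y (n + 1)) P := fun n => (hYL2 n).integrable one_le_two
  have hY2i : ∀ n, Integrable (fun ω => Y (n + 1) ω ^ 2) P := fun n => (hYL2 n).integrable_sq
  have hgm : ∀ n, StronglyMeasurable[𝓕 n] (g n) := fun n => stronglyMeasurable_condExp
  have hbm : ∀ n, StronglyMeasurable[𝓕 n] (b n) := fun n => stronglyMeasurable_condExp
  have hgi : ∀ n, Integrable (g n) P := fun n => integrable_condExp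
  have hbi : ∀ n, Integrable (b n) P := fun n => integrable_condExp
  have hb0 : ∀ n, (0 : Ω → ℝ) ≤ᵐ[P] b n := fun n =>
    condExp_nonneg (Eventually.of_forall fun ω => sq_nonneg _)
  -- conditional Cauchy-Schwarz / Jensen: (g n)² ≤ b n a.e.
  have hg2b : ∀ n, ∀ᵐ ω ∂P, g n ω ^ 2 ≤ b n ω := by
    intro n
    have hq : ∀ q : ℚ, ∀ᵐ ω ∂P, 0 ≤ b n ω - 2 * q * g n ω + (q : ℝ) ^ 2 := by
      intro q
      have hu_int : Integrable ((fun _ : Ω => (2 * (q : ℝ))) * Y (n + 1)) P := by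
        have := (hYi n).const_mul (2 * (q : ℝ))
        exact this
      have hnn : (0 : Ω → ℝ) ≤ᵐ[P] P[(fun ω => (Y (n + 1) ω - (q : ℝ)) ^ 2)|𝓕 n] :=
        condExp_nonneg (Eventually.of_forall fun ω => sq_nonneg _)
      have hfun : (fun ω => (Y (n + 1) ω - (q : ℝ)) ^ 2) =
          ((fun ω => Y (n + 1) ω ^ 2) - (fun _ : Ω => (2 * (q : ℝ))) * Y (n + 1))
            + (fun _ : Ω => (q : ℝ) ^ 2) := by
        funext ω
        simp only [Pi.add_apply, Pi.sub_apply, Pi.mul_apply]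
        ring
      have e1 : P[(fun ω => (Y (n + 1) ω - (q : ℝ)) ^ 2)|𝓕 n] =ᵐ[P]
          P[(fun ω => Y (n + 1) ω ^ 2) - (fun _ : Ω => (2 * (q : ℝ))) * Y (n + 1)|𝓕 n]
            + P[(fun _ : Ω => (q : ℝ) ^ 2)|𝓕 n] := by
        rw [hfun]
        exact condExp_add ((hY2i n).sub hu_int) (integrable_const _) _
      have e2 : P[(fun ω => Y (n + 1) ω ^ 2) - (fun _ : Ω => (2 * (q : ℝ))) * Y (n + 1)|𝓕 n]
          =ᵐ[P] P[(fun ω => Y (n + 1) ω ^ 2)|𝓕 n]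
            - P[(fun _ : Ω => (2 * (q : ℝ))) * Y (n + 1)|𝓕 n] :=
        condExp_sub (hY2i n) hu_int _
      have e3 : P[(fun _ : Ω => (2 * (q : ℝ))) * Y (n + 1)|𝓕 n] =ᵐ[P]
          (fun _ : Ω => (2 * (q : ℝ))) * P[Y (n + 1)|𝓕 n] :=
        condExp_mul_of_stronglyMeasurable_left stronglyMeasurable_const hu_int (hYi n)
      have e4 : P[(fun _ : Ω => (q : ℝ) ^ 2)|𝓕 n] = fun _ : Ω => (q : ℝ) ^ 2 :=
        condExp_const (𝓕.le n) _
      filter_upwards [hnn, e1, e2, e3] with ω h0 h1' h2' h3'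
      rw [h1'] at h0
      simp only [Pi.add_apply, Pi.sub_apply, Pi.mul_apply, e4] at h0
      rw [h2'] at h0
      simp only [Pi.sub_apply] at h0
      rw [h3'] at h0
      simp only [Pi.mul_apply] at h0
      calc (0 : ℝ) ≤ _ := h0
        _ = b n ω - 2 * q * g n ω + (q : ℝ) ^ 2 := by
          simp only [hbdef, hgdef]
    rw [← ae_all_iff] at hq
    filter_upwards [hq] with ω hω
    by_contra hlt
    push_neg at hlt
    have hopen : IsOpen {x : ℝ | b n ω - 2 * x * g n ω + x ^ 2 < 0} := by
      have hcont : Continuous fun x : ℝ => b n ω - 2 * x * g n ω + x ^ 2 := by continuity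
      exact isOpen_lt hcont continuous_const
    have hmemopen : g n ω ∈ {x : ℝ | b n ω - 2 * x * g n ω + x ^ 2 < 0} := by
      simp only [Set.mem_setOf_eq]
      nlinarith [hlt]
    obtain ⟨q, hq2⟩ := Rat.denseRange_cast.exists_mem_open hopen ⟨_, hmemopen⟩
    simp only [Set.mem_setOf_eq] at hq2
    exact absurd (hω q) (by push_neg; linarith)
  have hg2i : ∀ n, Integrable (fun ω => g n ω ^ 2) P := by
    intro n
    have hsm : StronglyMeasurable (fun ω => g n ω ^ 2) := by
      have h := (hgm n).mono (𝓕.le n)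
      have : (fun ω => g n ω ^ 2) = fun ω => g n ω * g n ω := by funext ω; ring
      rw [this]; exact h.mul h
    refine Integrable.mono' (hbi n) hsm.aestronglyMeasurable ?_
    filter_upwards [hg2b n] with ω hω
    rw [Real.norm_eq_abs, abs_of_nonneg (sq_nonneg _)]
    exact hω
  have hgL2 : ∀ n, MemLp (g n) 2 P := fun n =>
    (memLp_two_iff_integrable_sq ((hgm n).mono (𝓕.le n)).aestronglyMeasurable).2 (hg2i n)
  have hXL2 : ∀ n, MemLp (X n) 2 P := fun n => (hYL2 n).sub (hgL2 n)
  have hXm : ∀ n, StronglyMeasurable[𝓕 (n + 1)] (X n) := fun n =>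
    (hmeas (n + 1) (Nat.le_add_left 1 n)).sub ((hgm n).mono (𝓕.mono n.le_succ))
  have hXc : ∀ n, P[X n|𝓕 n] =ᵐ[P] 0 := by
    intro n
    refine (condExp_sub (hYi n) (hgi n) _).trans ?_
    rw [condExp_of_stronglyMeasurable (𝓕.le n) (hgm n) (hgi n)]
    filter_upwards with ω
    simp [hgdef]
  have hXv : ∀ n, P[(fun ω => X n ω ^ 2)|𝓕 n] ≤ᵐ[P] b n := by
    intro n
    have hu_int : Integrable ((fun ω => 2 * g n ω) * Y (n + 1)) P := by
      have := mul_integrable_of_memL2 ((hgL2 n).const_mul 2) (hYL2 n)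
      exact this
    have hfun : (fun ω => X n ω ^ 2) =
        ((fun ω => Y (n + 1) ω ^ 2) - (fun ω => 2 * g n ω) * Y (n + 1))
          + fun ω => g n ω ^ 2 := by
      funext ω
      simp only [hXdef, Pi.add_apply, Pi.sub_apply, Pi.mul_apply]
      ring
    have hsm' : StronglyMeasurable[𝓕 n] (fun ω => g n ω ^ 2) := by
      have : (fun ω => g n ω ^ 2) = fun ω => g n ω * g n ω := by funext ω; ring
      rw [this]; exact (hgm n).mul (hgm n)
    have e1 : P[(fun ω => X n ω ^ 2)|𝓕 n] =ᵐ[P]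
        P[(fun ω => Y (n + 1) ω ^ 2) - (fun ω => 2 * g n ω) * Y (n + 1)|𝓕 n]
          + P[(fun ω => g n ω ^ 2)|𝓕 n] := by
      rw [hfun]
      exact condExp_add ((hY2i n).sub hu_int) (hg2i n) _
    have e2 : P[(fun ω => Y (n + 1) ω ^ 2) - (fun ω => 2 * g n ω) * Y (n + 1)|𝓕 n] =ᵐ[P]
        P[(fun ω => Y (n + 1) ω ^ 2)|𝓕 n] - P[(fun ω => 2 * g n ω) * Y (n + 1)|𝓕 n] :=
      condExp_sub (hY2i n) hu_int _
    have e3 : P[(fun ω => 2 * g n ω) * Y (n + 1)|𝓕 n] =ᵐ[P]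
        (fun ω => 2 * g n ω) * P[Y (n + 1)|𝓕 n] :=
      condExp_mul_of_stronglyMeasurable_left ((hgm n).const_mul 2) hu_int (hYi n)
    have e4 : P[(fun ω => g n ω ^ 2)|𝓕 n] = fun ω => g n ω ^ 2 :=
      condExp_of_stronglyMeasurable (𝓕.le n) hsm' (hg2i n)
    filter_upwards [e1, e2, e3] with ω h1' h2' h3'
    rw [h1']
    simp only [Pi.add_apply, e4]
    rw [h2']
    simp only [Pi.sub_apply]
    rw [h3']
    simp only [Pi.mul_apply]
    have : (P[(fun ω => Y (n + 1) ω ^ 2)|𝓕 n]) ω = b n ω := by rw [hbdef]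
    rw [this]
    have hgg : (P[Y (n + 1)|𝓕 n]) ω = g n ω := by rw [hgdef]
    rw [hgg]
    nlinarith [sq_nonneg (g n ω)]
  have haux : ∀ K : ℕ, ∀ᵐ ω ∂P,
      (∀ N, ∑ m ∈ Finset.range N, b m ω ≤ (K : ℝ)) →
        ∃ c, Tendsto (fun N => ∑ m ∈ Finset.range N, X m ω) atTop (nhds c) := fun K =>
    aux_conv 𝓕 X b K hXm hXL2 hXc hbm hbi hXv
  rw [← ae_all_iff] at haux
  have hb0' : ∀ᵐ ω ∂P, ∀ n, 0 ≤ b n ω := ae_all_iff.2 fun n => hb0 n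
  filter_upwards [haux, h1, h2, hb0'] with ω hω h1ω h2ω hbω
  obtain ⟨l2, hl2⟩ := h2ω
  have hmono : Monotone fun N => ∑ m ∈ Finset.range N, b m ω := by
    refine monotone_nat_of_le_succ fun N => ?_
    rw [Finset.sum_range_succ]
    have := hbω N
    linarith
  have hle : ∀ N, ∑ m ∈ Finset.range N, b m ω ≤ l2 := hmono.ge_of_tendsto hl2
  obtain ⟨K, hK⟩ := exists_nat_ge l2
  obtain ⟨c, hc⟩ := hω K fun N => (hle N).trans hK
  obtain ⟨l1, hl1⟩ := h1ω
  refine ⟨c + l1, ?_⟩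
  have hY : ∀ N, ∑ m ∈ Finset.range N, Y (m + 1) ω =
      (∑ m ∈ Finset.range N, X m ω) + ∑ m ∈ Finset.range N, g m ω := by
    intro N
    rw [← Finset.sum_add_distrib]
    refine Finset.sum_congr rfl fun m _ => ?_
    simp [hXdef]
  have := hc.add hl1
  refine Tendsto.congr (fun N => ?_) this
  exact (hY N).symm
end

section
/- Let X_1, X_2, … be independent nonnegative random variables each with mean 1, M_0 = 1 and M_n = X_1 ⋯ X_n, and set a_n = E(√X_n) ∈ (0,1]. If ∑_n (1 - a_n) < ∞, then M_n converges almost surely and in L¹ to a random variable M_∞ with E(M_∞) = 1. -/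
open MeasureTheory ProbabilityTheory Filter
open scoped BigOperators

private lemma kakutani_aux_prod_int
    {Ω : Type*} {m0 : MeasurableSpace Ω} {P : Measure Ω} [IsProbabilityMeasure P]
    (Z : ℕ → Ω → ℝ) (hmeas : ∀ i, Measurable (Z i))
    (hindep : iIndepFun Z P)
    (hint : ∀ i, Integrable (Z i) P) (n : ℕ) :
    Integrable (fun ω => ∏ i ∈ Finset.range n, Z i ω) P ∧
      ∫ ω, ∏ i ∈ Finset.range n, Z i ω ∂P = ∏ i ∈ Finset.range n, ∫ ω, Z i ω ∂P := by
  induction n with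
  | zero => simp
  | succ n ih =>
    have hIF : IndepFun (∏ j ∈ Finset.range n, Z j) (Z n) P :=
      hindep.indepFun_prod_range_succ hmeas n
    have hprod : (∏ j ∈ Finset.range n, Z j) = fun ω => ∏ i ∈ Finset.range n, Z i ω := by
      funext ω; simp
    have hmul : Integrable ((∏ j ∈ Finset.range n, Z j) * Z n) P :=
      hIF.integrable_mul (hprod ▸ ih.1) (hint n)
    have hIeq : ((∏ j ∈ Finset.range n, Z j) * Z n)
        = fun ω => ∏ i ∈ Finset.range (n + 1), Z i ω := by
      funext ω; simp [Finset.prod_range_succ]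
    constructor
    · exact hIeq ▸ hmul
    · have := hIF.integral_mul_eq_mul_integral (hprod ▸ ih.1).aestronglyMeasurable (hint n).aestronglyMeasurable
      rw [hIeq] at this
      rw [this, Finset.prod_range_succ, ← ih.2, hprod]

private lemma kakutani_aux_inv_prod_bound
    (a : ℕ → ℝ) (ha_pos : ∀ n, 0 < a n) (ha_le : ∀ n, a n ≤ 1)
    (hsum : Summable (fun n => 1 - a n)) :
    ∃ B : ℝ, 0 < B ∧ ∀ n, ∏ i ∈ Finset.range n, (a i)⁻¹ ≤ B := by
  -- t i = -log (a i) ≥ 0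
  set t : ℕ → ℝ := fun i => -Real.log (a i) with ht
  have ht_nonneg : ∀ i, 0 ≤ t i := fun i => by
    have := Real.log_nonpos (ha_pos i).le (ha_le i); simp [ht]; linarith
  -- eventually a n ≥ 1/2
  have htendsto : Tendsto (fun n => 1 - a n) atTop (nhds 0) := hsum.tendsto_atTop_zero
  obtain ⟨K, hK⟩ : ∃ K, ∀ n ≥ K, 1 - a n < 1/2 := by
    have := htendsto.eventually (gt_mem_nhds (by norm_num : (0:ℝ) < 1/2))
    exact eventually_atTop.1 this
  have hts : Summable t := by
    rw [← summable_nat_add_iff K]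
    have hsum' : Summable (fun n => 2 * (1 - a (n + K))) :=
      (((summable_nat_add_iff K).2 hsum).mul_left 2)
    refine Summable.of_nonneg_of_le (fun n => ht_nonneg _) (fun n => ?_) hsum'
    have han : 1 - a (n + K) < 1/2 := hK _ (Nat.le_add_left K n)
    have hapos := ha_pos (n + K)
    have hlog : Real.log ((a (n + K))⁻¹) ≤ (a (n + K))⁻¹ - 1 :=
      Real.log_le_sub_one_of_pos (by positivity)
    have : t (n + K) = Real.log ((a (n + K))⁻¹) := by
      simp [ht, Real.log_inv]
    rw [this]
    have h2 : (a (n + K))⁻¹ ≤ 2 := by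
      rw [inv_le_comm₀ hapos (by norm_num)]
      linarith
    have h3 : (a (n + K))⁻¹ - 1 ≤ 2 * (1 - a (n + K)) := by
      have hinv : (a (n + K))⁻¹ * a (n + K) = 1 := inv_mul_cancel₀ hapos.ne'
      nlinarith [mul_nonneg (sub_nonneg.2 h2) (sub_nonneg.2 (ha_le (n + K))), hinv]
    linarith
  set S := ∑' i, t i with hS
  refine ⟨Real.exp S, Real.exp_pos S, fun n => ?_⟩
  have hpart : ∑ i ∈ Finset.range n, t i ≤ S :=
    Summable.sum_le_tsum _ (fun i _ => ht_nonneg i) hts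
  have : ∏ i ∈ Finset.range n, (a i)⁻¹ = Real.exp (∑ i ∈ Finset.range n, t i) := by
    rw [Real.exp_sum]
    refine Finset.prod_congr rfl fun i _ => ?_
    rw [ht]
    simp [Real.exp_neg, Real.exp_log (ha_pos i)]
  rw [this]
  exact Real.exp_le_exp.2 hpart

theorem kakutani_product_martingale
    {Ω : Type*} {m0 : MeasurableSpace Ω} {P : Measure Ω} [IsProbabilityMeasure P]
    (X : ℕ → Ω → ℝ) (hXmeas : ∀ n, Measurable (X n))
    (hindep : iIndepFun X P)
    (hpos : ∀ n, ∀ ω, 0 ≤ X n ω)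
    (hint : ∀ n, Integrable (X n) P)
    (hmean : ∀ n, ∫ ω, X n ω ∂P = 1)
    (M : ℕ → Ω → ℝ) (hM : ∀ n ω, M n ω = ∏ i ∈ Finset.range n, X i ω)
    (a : ℕ → ℝ) (ha : ∀ n, a n = ∫ ω, Real.sqrt (X n ω) ∂P)
    (ha_pos : ∀ n, 0 < a n) (ha_le : ∀ n, a n ≤ 1)
    (hsum : Summable (fun n => 1 - a n)) :
    ∃ Mlim : Ω → ℝ,
      (∀ᵐ ω ∂P, Tendsto (fun n => M n ω) atTop (nhds (Mlim ω))) ∧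
      Tendsto (fun n => ∫ ω, |M n ω - Mlim ω| ∂P) atTop (nhds 0) ∧
      ∫ ω, Mlim ω ∂P = 1 := by
  classical
  set Y : ℕ → Ω → ℝ := fun i ω => Real.sqrt (X i ω) / a i with hYdef
  have hYmeas : ∀ i, Measurable (Y i) :=
    fun i => (Real.continuous_sqrt.measurable.comp (hXmeas i)).div_const _
  have hYnonneg : ∀ i ω, 0 ≤ Y i ω :=
    fun i ω => div_nonneg (Real.sqrt_nonneg _) (ha_pos i).le
  have hsqrt_int : ∀ i, Integrable (fun ω => Real.sqrt (X i ω)) P := by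
    intro i
    refine Integrable.mono' ((integrable_const 1).add (hint i))
      (Real.continuous_sqrt.measurable.comp (hXmeas i)).aestronglyMeasurable
      (Filter.Eventually.of_forall fun ω => ?_)
    have hx := hpos i ω
    have h1 := Real.sq_sqrt hx
    have h2 := Real.sqrt_nonneg (X i ω)
    rw [Real.norm_of_nonneg h2]
    simp only [Pi.add_apply]
    nlinarith
  have hYint : ∀ i, Integrable (Y i) P := fun i => (hsqrt_int i).div_const _
  have hYmean : ∀ i, ∫ ω, Y i ω ∂P = 1 := by
    intro i
    simp only [hYdef]
    rw [integral_div, ← ha, div_self (ha_pos i).ne']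
  have hYindep : iIndepFun Y P :=
    hindep.comp (fun i t => Real.sqrt t / a i)
      (fun i => Real.continuous_sqrt.measurable.div_const _)
  set N : ℕ → Ω → ℝ := fun n ω => ∏ i ∈ Finset.range n, Y i ω with hNdef
  have hNint : ∀ n, Integrable (N n) P :=
    fun n => (kakutani_aux_prod_int Y hYmeas hYindep hYint n).1
  have hNmean : ∀ n, ∫ ω, N n ω ∂P = 1 := by
    intro n
    rw [show (∫ ω, N n ω ∂P) = ∫ ω, ∏ i ∈ Finset.range n, Y i ω ∂P from rfl,
      (kakutani_aux_prod_int Y hYmeas hYindep hYint n).2]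
    exact Finset.prod_eq_one fun i _ => hYmean i
  have hNnonneg : ∀ n ω, 0 ≤ N n ω :=
    fun n ω => Finset.prod_nonneg fun i _ => hYnonneg i ω
  -- filtration
  set ℱ : Filtration ℕ m0 :=
    { seq := fun n => ⨆ i ∈ Set.Iio n, MeasurableSpace.comap (X i) inferInstance
      mono' := fun n m hnm => biSup_mono (fun i hi => lt_of_lt_of_le hi hnm)
      le' := fun n => iSup₂_le fun i _ => (hXmeas i).comap_le } with hℱdef
  have hXad : ∀ i n, i < n → Measurable[ℱ n] (X i) := by
    intro i n hi
    have h1 : Measurable[MeasurableSpace.comap (X i) inferInstance] (X i) :=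
      measurable_iff_comap_le.2 le_rfl
    have hle : MeasurableSpace.comap (X i) inferInstance ≤ ℱ n := by
      have : ℱ n = ⨆ j ∈ Set.Iio n, MeasurableSpace.comap (X j) inferInstance := rfl
      rw [this]
      exact le_biSup (fun j => MeasurableSpace.comap (X j) inferInstance) (Set.mem_Iio.2 hi)
    exact h1.mono hle le_rfl
  have hNadapted : StronglyAdapted ℱ N := by
    intro n
    refine Measurable.stronglyMeasurable ?_
    refine Finset.measurable_prod _ (fun i hi => ?_)
    exact (Real.continuous_sqrt.measurable.comp (hXad i n (Finset.mem_range.1 hi))).div_const _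
  have hNmart : Martingale N ℱ P := by
    refine martingale_nat hNadapted hNint (fun n => ?_)
    have hsplit : N (n + 1) = N n * Y n := by
      funext ω; exact Finset.prod_range_succ _ _
    have hpull : P[N n * Y n | ℱ n] =ᵐ[P] N n * P[Y n | ℱ n] :=
      condExp_mul_of_stronglyMeasurable_left (hNadapted n) (hsplit ▸ hNint (n + 1)) (hYint n)
    have hindp : Indep (MeasurableSpace.comap (X n) inferInstance) (ℱ n) P := by
      have h := indep_iSup_of_disjoint (m := fun i => MeasurableSpace.comap (X i) inferInstance)
        (fun i => (hXmeas i).comap_le)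
        ((iIndepFun_iff_iIndep _ _ _).1 hindep) (S := {n}) (T := Set.Iio n)
        (by simp [Set.disjoint_left])
      change Indep _ (⨆ i ∈ Set.Iio n, MeasurableSpace.comap (X i) inferInstance) P
      simpa [iSup_singleton] using h
    have hYsm : StronglyMeasurable[MeasurableSpace.comap (X n) inferInstance] (Y n) := by
      refine Measurable.stronglyMeasurable ?_
      exact (Real.continuous_sqrt.measurable.comp (measurable_iff_comap_le.2 le_rfl)).div_const _
    have hcond : P[Y n | ℱ n] =ᵐ[P] fun _ => ∫ ω, Y n ω ∂P :=
      condExp_indep_eq (hXmeas n).comap_le (ℱ.le n) hYsm hindp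
    rw [hsplit]
    filter_upwards [hpull, hcond] with ω h1 h2
    rw [h1, Pi.mul_apply, h2, hYmean n, mul_one]
  have hNmeas : ∀ n, Measurable (N n) :=
    fun n => Finset.measurable_prod _ fun i _ => hYmeas i
  -- L¹ bound and a.s. convergence
  have hbdd : ∀ n, eLpNorm (N n) 1 P ≤ (1 : NNReal) := by
    intro n
    have hnn : ∀ ω, ‖N n ω‖ₑ = ENNReal.ofReal (N n ω) := fun ω => by
      rw [← ofReal_norm, Real.norm_of_nonneg (hNnonneg n ω)]
    have h1 : eLpNorm (N n) 1 P = ENNReal.ofReal (∫ ω, N n ω ∂P) := by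
      rw [eLpNorm_one_eq_lintegral_enorm, lintegral_congr hnn,
        ← ofReal_integral_eq_lintegral_ofReal (hNint n)
          (Filter.Eventually.of_forall (hNnonneg n))]
    rw [h1, hNmean n]
    simp
  set Ninf : Ω → ℝ := ℱ.limitProcess N P with hNinfdef
  have hNae : ∀ᵐ ω ∂P, Tendsto (fun n => N n ω) atTop (nhds (Ninf ω)) :=
    hNmart.submartingale.ae_tendsto_limitProcess hbdd
  have hNinfsm : StronglyMeasurable Ninf := Filtration.stronglyMeasurable_limit_process'
  have hNinfmeas : Measurable Ninf := hNinfsm.measurable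
  -- squares
  set Y2 : ℕ → Ω → ℝ := fun i ω => (Y i ω) ^ 2 with hY2def
  have hY2eq : ∀ i, Y2 i = fun ω => X i ω / (a i) ^ 2 := by
    intro i; funext ω
    simp only [hY2def, hYdef, div_pow, Real.sq_sqrt (hpos i ω)]
  have hY2meas : ∀ i, Measurable (Y2 i) := fun i => (hYmeas i).pow_const 2
  have hY2int : ∀ i, Integrable (Y2 i) P := by
    intro i; rw [hY2eq i]; exact (hint i).div_const _
  have hY2mean : ∀ i, ∫ ω, Y2 i ω ∂P = ((a i) ^ 2)⁻¹ := by
    intro i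
    rw [hY2eq i]
    rw [integral_div, hmean i]
    simp [div_eq_mul_inv]
  have hY2indep : iIndepFun Y2 P :=
    hindep.comp (fun i t => (Real.sqrt t / a i) ^ 2)
      (fun i => ((Real.continuous_sqrt.measurable).div_const _).pow_const 2)
  set b : ℕ → ℝ := fun n => ∏ i ∈ Finset.range n, ((a i) ^ 2)⁻¹ with hbdef
  have hNsq : ∀ n, Integrable (fun ω => (N n ω) ^ 2) P ∧ ∫ ω, (N n ω) ^ 2 ∂P = b n := by
    intro n
    have h := kakutani_aux_prod_int Y2 hY2meas hY2indep hY2int n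
    have heq : (fun ω => ∏ i ∈ Finset.range n, Y2 i ω) = fun ω => (N n ω) ^ 2 := by
      funext ω; simp only [hY2def, hNdef, Finset.prod_pow]
    rw [heq] at h
    refine ⟨h.1, ?_⟩
    rw [h.2, hbdef]
    exact Finset.prod_congr rfl fun i _ => hY2mean i
  -- bound on b
  obtain ⟨B, hBpos, hB⟩ := kakutani_aux_inv_prod_bound a ha_pos ha_le hsum
  have hbB : ∀ n, b n ≤ B ^ 2 := by
    intro n
    have : b n = (∏ i ∈ Finset.range n, (a i)⁻¹) ^ 2 := by
      rw [hbdef, ← Finset.prod_pow]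
      exact Finset.prod_congr rfl fun i _ => by rw [inv_pow]
    rw [this]
    have h0 : 0 ≤ ∏ i ∈ Finset.range n, (a i)⁻¹ :=
      Finset.prod_nonneg fun i _ => inv_nonneg.2 (ha_pos i).le
    nlinarith [hB n]
  have hbmono : Monotone b := by
    refine monotone_nat_of_le_succ fun n => ?_
    have : b (n + 1) = b n * ((a n) ^ 2)⁻¹ := Finset.prod_range_succ _ _
    rw [this]
    have h1 : (1:ℝ) ≤ ((a n) ^ 2)⁻¹ := by
      rw [one_le_inv_iff₀]
      constructor
      · exact pow_pos (ha_pos n) 2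
      · nlinarith [ha_le n, ha_pos n]
    have h0 : 0 ≤ b n := Finset.prod_nonneg fun i _ => by positivity
    nlinarith
  have hbddAbove : BddAbove (Set.range b) := ⟨B ^ 2, by rintro x ⟨n, rfl⟩; exact hbB n⟩
  set L : ℝ := ⨆ n, b n with hLdef
  have hbL : Tendsto b atTop (nhds L) := tendsto_atTop_ciSup hbmono hbddAbove
  have hbleL : ∀ n, b n ≤ L := fun n => le_ciSup hbddAbove n
  -- cross terms
  have hcross : ∀ n m, n ≤ m →
      Integrable (fun ω => N n ω * N m ω) P ∧ ∫ ω, N n ω * N m ω ∂P = b n := by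
    intro n m hnm
    set W : ℕ → Ω → ℝ := fun i => if i < n then Y2 i else Y i with hWdef
    have hWmeas : ∀ i, Measurable (W i) := by
      intro i
      by_cases h : i < n <;> simp only [hWdef, h, if_true, if_false]
      exacts [hY2meas i, hYmeas i]
    have hWint : ∀ i, Integrable (W i) P := by
      intro i
      by_cases h : i < n <;> simp only [hWdef, h, if_true, if_false]
      exacts [hY2int i, hYint i]
    have hWindep : iIndepFun W P := by
      have := hindep.comp
        (fun i t => if i < n then (Real.sqrt t / a i) ^ 2 else Real.sqrt t / a i)
        (fun i => by
          by_cases h : i < n <;> simp only [h, if_true, if_false]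
          exacts [((Real.continuous_sqrt.measurable).div_const _).pow_const 2,
            (Real.continuous_sqrt.measurable).div_const _])
      convert this using 2 with i
      by_cases h : i < n <;> simp only [hWdef, h, if_true, if_false] <;> rfl
    have hprodW : ∀ ω, N n ω * N m ω = ∏ i ∈ Finset.range m, W i ω := by
      intro ω
      rw [← Finset.prod_range_mul_prod_Ico (fun i => W i ω) hnm]
      have h1 : ∏ i ∈ Finset.range n, W i ω = (N n ω) ^ 2 := by
        rw [show (N n ω) ^ 2 = ∏ i ∈ Finset.range n, (Y i ω) ^ 2 by
          rw [Finset.prod_pow]]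
        exact Finset.prod_congr rfl fun i hi => by
          simp [hWdef, Finset.mem_range.1 hi, hY2def]
      have h2 : ∏ i ∈ Finset.Ico n m, W i ω = ∏ i ∈ Finset.Ico n m, Y i ω := by
        refine Finset.prod_congr rfl fun i hi => ?_
        have : ¬ i < n := not_lt.2 (Finset.mem_Ico.1 hi).1
        simp [hWdef, this]
      have h3 : N m ω = N n ω * ∏ i ∈ Finset.Ico n m, Y i ω := by
        rw [show N m ω = ∏ i ∈ Finset.range m, Y i ω from rfl,
          ← Finset.prod_range_mul_prod_Ico (fun i => Y i ω) hnm]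
      rw [h1, h2, h3]
      ring
    have h := kakutani_aux_prod_int W hWmeas hWindep hWint m
    have heq : (fun ω => ∏ i ∈ Finset.range m, W i ω) = fun ω => N n ω * N m ω := by
      funext ω; rw [hprodW ω]
    rw [heq] at h
    refine ⟨h.1, ?_⟩
    rw [h.2]
    have : ∀ i, ∫ ω, W i ω ∂P = if i < n then ((a i) ^ 2)⁻¹ else 1 := by
      intro i
      by_cases hi : i < n <;> simp only [hWdef, hi, if_true, if_false]
      exacts [hY2mean i, hYmean i]
    rw [Finset.prod_congr rfl fun i _ => this i,
      ← Finset.prod_range_mul_prod_Ico _ hnm]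
    have hA : ∏ i ∈ Finset.range n, (if i < n then ((a i) ^ 2)⁻¹ else 1) = b n :=
      Finset.prod_congr rfl fun i hi => by simp [Finset.mem_range.1 hi]
    have hBB : ∏ i ∈ Finset.Ico n m, (if i < n then ((a i) ^ 2)⁻¹ else 1) = 1 :=
      Finset.prod_eq_one fun i hi => by simp [not_lt.2 (Finset.mem_Ico.1 hi).1]
    rw [hA, hBB, mul_one]
  -- second moment of differences
  have hdiff : ∀ n m, n ≤ m →
      Integrable (fun ω => (N m ω - N n ω) ^ 2) P ∧
        ∫ ω, (N m ω - N n ω) ^ 2 ∂P = b m - b n := by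
    intro n m hnm
    have hint1 := (hNsq m).1
    have hint2 := (hNsq n).1
    have hint3 := (hcross n m hnm).1
    have heq : (fun ω => (N m ω - N n ω) ^ 2)
        = fun ω => (N m ω) ^ 2 - 2 * (N n ω * N m ω) + (N n ω) ^ 2 := by
      funext ω; ring
    have hint3' : Integrable (fun ω => 2 * (N n ω * N m ω)) P := hint3.const_mul 2
    have hint4 : Integrable (fun ω => (N m ω) ^ 2 - 2 * (N n ω * N m ω)) P :=
      hint1.sub hint3'
    constructor
    · rw [heq]
      exact hint4.add hint2
    · rw [heq, integral_add hint4 hint2, integral_sub hint1 hint3',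
        integral_const_mul 2 _, (hNsq m).2, (hNsq n).2, (hcross n m hnm).2]
      ring
  -- Fatou
  have hfatou : ∀ n, ∫⁻ ω, ENNReal.ofReal ((Ninf ω - N n ω) ^ 2) ∂P
      ≤ ENNReal.ofReal (L - b n) := by
    intro n
    have hae2 : ∀ᵐ ω ∂P, ENNReal.ofReal ((Ninf ω - N n ω) ^ 2)
        = Filter.liminf (fun m => ENNReal.ofReal ((N m ω - N n ω) ^ 2)) atTop := by
      filter_upwards [hNae] with ω hω
      have h1 : Tendsto (fun m => (N m ω - N n ω) ^ 2) atTop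
          (nhds ((Ninf ω - N n ω) ^ 2)) := (hω.sub tendsto_const_nhds).pow 2
      have h2 : Tendsto (fun m => ENNReal.ofReal ((N m ω - N n ω) ^ 2)) atTop
          (nhds (ENNReal.ofReal ((Ninf ω - N n ω) ^ 2))) :=
        (ENNReal.continuous_ofReal.tendsto _).comp h1
      exact h2.liminf_eq.symm
    calc ∫⁻ ω, ENNReal.ofReal ((Ninf ω - N n ω) ^ 2) ∂P
        = ∫⁻ ω, Filter.liminf (fun m => ENNReal.ofReal ((N m ω - N n ω) ^ 2)) atTop ∂P :=
          lintegral_congr_ae hae2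
      _ ≤ Filter.liminf (fun m => ∫⁻ ω, ENNReal.ofReal ((N m ω - N n ω) ^ 2) ∂P) atTop :=
          lintegral_liminf_le
            (fun m => (((hNmeas m).sub (hNmeas n)).pow_const 2).ennreal_ofReal)
      _ ≤ ENNReal.ofReal (L - b n) := by
          have hev : ∀ᶠ m in atTop,
              (∫⁻ ω, ENNReal.ofReal ((N m ω - N n ω) ^ 2) ∂P) ≤ ENNReal.ofReal (L - b n) := by
            filter_upwards [eventually_ge_atTop n] with m hm
            rw [← ofReal_integral_eq_lintegral_ofReal (hdiff n m hm).1
              (Filter.Eventually.of_forall fun ω => sq_nonneg _), (hdiff n m hm).2]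
            exact ENNReal.ofReal_le_ofReal (by linarith [hbleL m])
          calc Filter.liminf (fun m => ∫⁻ ω, ENNReal.ofReal ((N m ω - N n ω) ^ 2) ∂P) atTop
              ≤ Filter.liminf (fun _ => ENNReal.ofReal (L - b n)) atTop :=
                Filter.liminf_le_liminf hev
            _ = ENNReal.ofReal (L - b n) := Filter.liminf_const _
  have hd2int : ∀ n, Integrable (fun ω => (Ninf ω - N n ω) ^ 2) P := by
    intro n
    have hm : Measurable fun ω => (Ninf ω - N n ω) ^ 2 :=
      (hNinfmeas.sub (hNmeas n)).pow_const 2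
    refine ⟨hm.aestronglyMeasurable, ?_⟩
    rw [hasFiniteIntegral_iff_ofReal (Filter.Eventually.of_forall fun ω => sq_nonneg _)]
    exact lt_of_le_of_lt (hfatou n) ENNReal.ofReal_lt_top
  set dd : ℕ → ℝ := fun n => ∫ ω, (Ninf ω - N n ω) ^ 2 ∂P with hdddef
  have hdd_nonneg : ∀ n, 0 ≤ dd n := fun n => integral_nonneg fun ω => sq_nonneg _
  have hdd_le : ∀ n, dd n ≤ L - b n := by
    intro n
    have h1 : ENNReal.ofReal (dd n) = ∫⁻ ω, ENNReal.ofReal ((Ninf ω - N n ω) ^ 2) ∂P :=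
      ofReal_integral_eq_lintegral_ofReal (hd2int n)
        (Filter.Eventually.of_forall fun ω => sq_nonneg _)
    have h2 : ENNReal.ofReal (dd n) ≤ ENNReal.ofReal (L - b n) := h1 ▸ hfatou n
    exact (ENNReal.ofReal_le_ofReal_iff (by linarith [hbleL n])).1 h2
  have hddto : Tendsto dd atTop (nhds 0) := by
    have h0 : Tendsto (fun n => L - b n) atTop (nhds 0) := by
      simpa using ((tendsto_const_nhds (x := L)).sub hbL)
    exact squeeze_zero hdd_nonneg hdd_le h0
  have hNinf2int : Integrable (fun ω => (Ninf ω) ^ 2) P := by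
    refine Integrable.mono' (((hd2int 0).const_mul 2).add (integrable_const 2))
      ((hNinfmeas.pow_const 2).aestronglyMeasurable)
      (Filter.Eventually.of_forall fun ω => ?_)
    have hN0 : N 0 ω = 1 := by simp [hNdef]
    rw [Real.norm_of_nonneg (sq_nonneg _)]
    simp only [Pi.add_apply]
    nlinarith [sq_nonneg (Ninf ω - 2), hN0]
  set C : ℝ := ∫ ω, (Ninf ω) ^ 2 ∂P with hCdef
  have hC0 : 0 ≤ C := integral_nonneg fun ω => sq_nonneg _
  set I : ℕ → ℝ := fun n => ∫ ω, |(N n ω) ^ 2 - (Ninf ω) ^ 2| ∂P with hIdef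
  have hIsqint : ∀ n, Integrable (fun ω => (N n ω) ^ 2 - (Ninf ω) ^ 2) P :=
    fun n => (hNsq n).1.sub hNinf2int
  have hI_nonneg : ∀ n, 0 ≤ I n := fun n => integral_nonneg fun ω => abs_nonneg _
  set K : ℝ := 2 * B ^ 2 + 2 * C with hKdef
  have hK0 : 0 ≤ K := by nlinarith [sq_nonneg B]
  have hIbound : ∀ n, I n ≤ Real.sqrt (dd n) * Real.sqrt K := by
    intro n
    have hdiffint : Integrable (fun ω => (N n ω - Ninf ω) ^ 2) P := by
      have : (fun ω => (N n ω - Ninf ω) ^ 2) = fun ω => (Ninf ω - N n ω) ^ 2 := by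
        funext ω; ring
      rw [this]; exact hd2int n
    have hplus_int : Integrable (fun ω => (N n ω + Ninf ω) ^ 2) P := by
      have heq : (fun ω => (N n ω + Ninf ω) ^ 2)
          = fun ω => 2 * (N n ω) ^ 2 + 2 * (Ninf ω) ^ 2 - (N n ω - Ninf ω) ^ 2 := by
        funext ω; ring
      rw [heq]
      exact (((hNsq n).1.const_mul 2).add (hNinf2int.const_mul 2)).sub hdiffint
    have hplus_bd : ∫ ω, (N n ω + Ninf ω) ^ 2 ∂P ≤ K := by
      have h1 : ∫ ω, (N n ω + Ninf ω) ^ 2 ∂P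
          ≤ ∫ ω, (2 * (N n ω) ^ 2 + 2 * (Ninf ω) ^ 2) ∂P := by
        refine integral_mono hplus_int
          (((hNsq n).1.const_mul 2).add (hNinf2int.const_mul 2)) (fun ω => ?_)
        nlinarith [sq_nonneg (N n ω - Ninf ω)]
      have h2 : ∫ ω, (2 * (N n ω) ^ 2 + 2 * (Ninf ω) ^ 2) ∂P = 2 * b n + 2 * C := by
        rw [integral_add ((hNsq n).1.const_mul 2) (hNinf2int.const_mul 2),
          integral_const_mul, integral_const_mul, (hNsq n).2, hCdef]
      have h3 : b n ≤ B ^ 2 := hbB n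
      calc ∫ ω, (N n ω + Ninf ω) ^ 2 ∂P ≤ 2 * b n + 2 * C := h1.trans h2.le
        _ ≤ K := by rw [hKdef]; linarith
    have hpq : Real.HolderConjugate 2 2 := Real.HolderConjugate.two_two
    have habs1 : MemLp (fun ω => |N n ω - Ninf ω|) (ENNReal.ofReal 2) P := by
      rw [show ENNReal.ofReal 2 = 2 by norm_num]
      refine (memLp_two_iff_integrable_sq ?_).2 ?_
      · exact ((hNmeas n).sub hNinfmeas).abs.aestronglyMeasurable
      · have : (fun ω => |N n ω - Ninf ω| ^ 2) = fun ω => (N n ω - Ninf ω) ^ 2 := by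
          funext ω; rw [sq_abs]
        rw [this]; exact hdiffint
    have habs2 : MemLp (fun ω => |N n ω + Ninf ω|) (ENNReal.ofReal 2) P := by
      rw [show ENNReal.ofReal 2 = 2 by norm_num]
      refine (memLp_two_iff_integrable_sq ?_).2 ?_
      · exact ((hNmeas n).add hNinfmeas).abs.aestronglyMeasurable
      · have : (fun ω => |N n ω + Ninf ω| ^ 2) = fun ω => (N n ω + Ninf ω) ^ 2 := by
          funext ω; rw [sq_abs]
        rw [this]; exact hplus_int
    have hCS := integral_mul_le_Lp_mul_Lq_of_nonneg hpq
      (Filter.Eventually.of_forall fun ω => abs_nonneg (N n ω - Ninf ω))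
      (Filter.Eventually.of_forall fun ω => abs_nonneg (N n ω + Ninf ω)) habs1 habs2
    have hIeq : I n = ∫ ω, |N n ω - Ninf ω| * |N n ω + Ninf ω| ∂P := by
      have h0 : I n = ∫ ω, |(N n ω) ^ 2 - (Ninf ω) ^ 2| ∂P := rfl
      rw [h0]
      refine integral_congr_ae (Filter.Eventually.of_forall fun ω => ?_)
      show |(N n ω) ^ 2 - (Ninf ω) ^ 2| = |N n ω - Ninf ω| * |N n ω + Ninf ω|
      rw [← abs_mul]
      congr 1
      ring
    have e1 : ∫ ω, |N n ω - Ninf ω| ^ 2 ∂P = dd n := by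
      have h0 : dd n = ∫ ω, (Ninf ω - N n ω) ^ 2 ∂P := rfl
      rw [h0]
      refine integral_congr_ae (Filter.Eventually.of_forall fun ω => ?_)
      show |N n ω - Ninf ω| ^ 2 = (Ninf ω - N n ω) ^ 2
      rw [sq_abs]; ring
    have e2 : ∫ ω, |N n ω + Ninf ω| ^ 2 ∂P = ∫ ω, (N n ω + Ninf ω) ^ 2 ∂P := by
      refine integral_congr_ae (Filter.Eventually.of_forall fun ω => ?_)
      show |N n ω + Ninf ω| ^ 2 = (N n ω + Ninf ω) ^ 2
      rw [sq_abs]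
    rw [hIeq]
    have hps : ∀ x : ℝ, 0 ≤ x → x ^ (1/(2:ℝ)) = Real.sqrt x := by
      intro x hx
      rw [Real.sqrt_eq_rpow]
    have h2int : 0 ≤ ∫ ω, (N n ω + Ninf ω) ^ 2 ∂P := integral_nonneg fun ω => sq_nonneg _
    calc ∫ ω, |N n ω - Ninf ω| * |N n ω + Ninf ω| ∂P
        ≤ (∫ ω, |N n ω - Ninf ω| ^ (2:ℝ) ∂P) ^ (1/(2:ℝ))
          * (∫ ω, |N n ω + Ninf ω| ^ (2:ℝ) ∂P) ^ (1/(2:ℝ)) := hCS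
      _ = Real.sqrt (dd n) * Real.sqrt (∫ ω, (N n ω + Ninf ω) ^ 2 ∂P) := by
          have hr : ∀ (f : Ω → ℝ), (∫ ω, |f ω| ^ (2:ℝ) ∂P) = ∫ ω, |f ω| ^ (2:ℕ) ∂P := by
            intro f
            refine integral_congr_ae (Filter.Eventually.of_forall fun ω => ?_)
            show |f ω| ^ (2:ℝ) = |f ω| ^ (2:ℕ)
            rw [← Real.rpow_natCast |f ω| 2]
            norm_num
          rw [hr, hr, e1, e2, hps _ (hdd_nonneg n), hps _ h2int]
      _ ≤ Real.sqrt (dd n) * Real.sqrt K := by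
          refine mul_le_mul_of_nonneg_left ?_ (Real.sqrt_nonneg _)
          exact Real.sqrt_le_sqrt hplus_bd
  have hIto : Tendsto I atTop (nhds 0) := by
    have h1 : Tendsto (fun n => Real.sqrt (dd n)) atTop (nhds 0) := by
      have := (Real.continuous_sqrt.tendsto 0).comp hddto
      simpa [Function.comp_def] using this
    have h2 : Tendsto (fun n => Real.sqrt (dd n) * Real.sqrt K) atTop (nhds 0) := by
      simpa using h1.mul_const (Real.sqrt K)
    exact squeeze_zero hI_nonneg hIbound h2
  -- the deterministic product c
  set c : ℕ → ℝ := fun n => ∏ i ∈ Finset.range n, a i with hcdef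
  have hc_nonneg : ∀ n, 0 ≤ c n := fun n => Finset.prod_nonneg fun i _ => (ha_pos i).le
  have hcanti : Antitone c := by
    refine antitone_nat_of_succ_le fun n => ?_
    have : c (n + 1) = c n * a n := Finset.prod_range_succ _ _
    rw [this]
    exact mul_le_of_le_one_right (hc_nonneg n) (ha_le n)
  have hcbdd : BddBelow (Set.range c) := ⟨0, by rintro x ⟨n, rfl⟩; exact hc_nonneg n⟩
  set cinf : ℝ := ⨅ n, c n with hcinfdef
  have hcto : Tendsto c atTop (nhds cinf) := tendsto_atTop_ciInf hcanti hcbdd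
  have hMeq : ∀ n, M n = fun ω => (c n) ^ 2 * (N n ω) ^ 2 := by
    intro n
    funext ω
    rw [hM n ω, ← mul_pow, hcdef]
    have : (∏ i ∈ Finset.range n, a i) * N n ω = ∏ i ∈ Finset.range n, (a i * Y i ω) := by
      rw [Finset.prod_mul_distrib]
    rw [this, ← Finset.prod_pow]
    refine Finset.prod_congr rfl fun i _ => ?_
    rw [hYdef]
    have : a i * (Real.sqrt (X i ω) / a i) = Real.sqrt (X i ω) :=
      mul_div_cancel₀ _ (ha_pos i).ne'
    simp only [this]
    exact (Real.sq_sqrt (hpos i ω)).symm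
  have hMint : ∀ n, Integrable (M n) P := by
    intro n
    rw [hMeq n]
    exact ((hNsq n).1.const_mul _)
  have hMlimint : Integrable (fun ω => cinf ^ 2 * (Ninf ω) ^ 2) P :=
    hNinf2int.const_mul _
  have hL1 : Tendsto (fun n => ∫ ω, |M n ω - cinf ^ 2 * (Ninf ω) ^ 2| ∂P)
      atTop (nhds 0) := by
    have hbound_int : ∀ n, Integrable
        (fun ω => (c n) ^ 2 * |(N n ω) ^ 2 - (Ninf ω) ^ 2|
          + |(c n) ^ 2 - cinf ^ 2| * (Ninf ω) ^ 2) P :=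
      fun n => ((hIsqint n).abs.const_mul _).add (hNinf2int.const_mul _)
    have hL1bound : ∀ n, ∫ ω, |M n ω - cinf ^ 2 * (Ninf ω) ^ 2| ∂P
        ≤ (c n) ^ 2 * I n + |(c n) ^ 2 - cinf ^ 2| * C := by
      intro n
      have h1 : ∫ ω, |M n ω - cinf ^ 2 * (Ninf ω) ^ 2| ∂P
          ≤ ∫ ω, ((c n) ^ 2 * |(N n ω) ^ 2 - (Ninf ω) ^ 2|
            + |(c n) ^ 2 - cinf ^ 2| * (Ninf ω) ^ 2) ∂P := by
        refine integral_mono ((hMint n).sub hMlimint).abs (hbound_int n) (fun ω => ?_)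
        simp only [Pi.abs_apply, Pi.sub_apply]
        rw [hMeq n]
        have hpt : (c n) ^ 2 * (N n ω) ^ 2 - cinf ^ 2 * (Ninf ω) ^ 2
            = (c n) ^ 2 * ((N n ω) ^ 2 - (Ninf ω) ^ 2)
              + ((c n) ^ 2 - cinf ^ 2) * (Ninf ω) ^ 2 := by ring
        rw [hpt]
        refine (abs_add_le _ _).trans ?_
        rw [abs_mul, abs_mul, abs_of_nonneg (sq_nonneg (c n)), abs_of_nonneg (sq_nonneg (Ninf ω))]
      have h2 : ∫ ω, ((c n) ^ 2 * |(N n ω) ^ 2 - (Ninf ω) ^ 2|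
            + |(c n) ^ 2 - cinf ^ 2| * (Ninf ω) ^ 2) ∂P
          = (c n) ^ 2 * I n + |(c n) ^ 2 - cinf ^ 2| * C := by
        rw [integral_add ((hIsqint n).abs.const_mul _) (hNinf2int.const_mul _),
          integral_const_mul, integral_const_mul,
          show (∫ ω, |(N n ω) ^ 2 - (Ninf ω) ^ 2| ∂P) = I n from rfl,
          show (∫ ω, (Ninf ω) ^ 2 ∂P) = C from rfl]
      exact h1.trans h2.le
    have habs_nonneg : ∀ n, 0 ≤ ∫ ω, |M n ω - cinf ^ 2 * (Ninf ω) ^ 2| ∂P :=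
      fun n => integral_nonneg fun ω => abs_nonneg _
    have hub : Tendsto (fun n => (c n) ^ 2 * I n + |(c n) ^ 2 - cinf ^ 2| * C)
        atTop (nhds 0) := by
      have h1 : Tendsto (fun n => (c n) ^ 2 * I n) atTop (nhds 0) := by
        simpa using (hcto.pow 2).mul hIto
      have h2 : Tendsto (fun n => |(c n) ^ 2 - cinf ^ 2| * C) atTop (nhds 0) := by
        have : Tendsto (fun n => |(c n) ^ 2 - cinf ^ 2|) atTop (nhds 0) := by
          have := ((hcto.pow 2).sub (tendsto_const_nhds (x := cinf ^ 2))).abs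
          simpa using this
        simpa using this.mul_const C
      simpa using h1.add h2
    exact squeeze_zero habs_nonneg hL1bound hub
  refine ⟨fun ω => cinf ^ 2 * (Ninf ω) ^ 2, ?_, hL1, ?_⟩
  · -- a.s. convergence
    filter_upwards [hNae] with ω hω
    have h1 : Tendsto (fun n => (c n) ^ 2 * (N n ω) ^ 2) atTop
        (nhds (cinf ^ 2 * (Ninf ω) ^ 2)) := (hcto.pow 2).mul (hω.pow 2)
    exact h1.congr fun n => by rw [hMeq n]
  · -- mean 1
    have hMmean : ∀ n, ∫ ω, M n ω ∂P = 1 := by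
      intro n
      have h := kakutani_aux_prod_int X hXmeas hindep hint n
      have heq : M n = fun ω => ∏ i ∈ Finset.range n, X i ω := by
        funext ω; exact hM n ω
      rw [heq, h.2]
      exact Finset.prod_eq_one fun i _ => hmean i
    have htend : Tendsto (fun n => ∫ ω, M n ω ∂P) atTop
        (nhds (∫ ω, cinf ^ 2 * (Ninf ω) ^ 2 ∂P)) := by
      rw [tendsto_iff_dist_tendsto_zero]
      refine squeeze_zero (fun n => dist_nonneg) (fun n => ?_) hL1
      rw [Real.dist_eq, ← integral_sub (hMint n) hMlimint]
      have hni := norm_integral_le_integral_norm (μ := P)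
        (f := fun ω => M n ω - cinf ^ 2 * (Ninf ω) ^ 2)
      simpa [Real.norm_eq_abs] using hni
    have : Tendsto (fun _ : ℕ => (1:ℝ)) atTop (nhds (∫ ω, cinf ^ 2 * (Ninf ω) ^ 2 ∂P)) := by
      refine htend.congr fun n => ?_
      rw [hMmean n]
    simpa using tendsto_nhds_unique this tendsto_const_nhds
end

section
/- Let (Z_i)_{i≥1} be i.i.d. standard exponential random variables and define M_n = ∏_{i=1}^n (i + Z_i)/(i+1). Then M_n converges almost surely and in L¹ to a random variable M_∞ with E(M_∞) = 1. -/
open MeasureTheory ProbabilityTheory Filter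
open scoped BigOperators ENNReal NNReal

lemma expMeasure_one_repr : expMeasure 1 =
    MeasureTheory.volume.withDensity
      (fun x => ENNReal.ofReal (if 0 ≤ x then Real.exp (-x) else 0)) := by
  have h : ∀ x : ℝ, gammaPDF 1 1 x = ENNReal.ofReal (if 0 ≤ x then Real.exp (-x) else 0) := by
    intro x
    rw [gammaPDF_eq]
    congr 1
    split_ifs with hx
    · simp [Real.Gamma_one, Real.rpow_zero, Real.rpow_one]
    · rfl
  rw [expMeasure, gammaMeasure]
  exact congrArg _ (funext h)

lemma integral_expMeasure_one (g : ℝ → ℝ) :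
    ∫ x, g x ∂(expMeasure 1) = ∫ x in Set.Ioi (0:ℝ), Real.exp (-x) * g x := by
  rw [expMeasure_one_repr]
  have hmeas : Measurable (fun x : ℝ => Real.toNNReal (if 0 ≤ x then Real.exp (-x) else 0)) := by
    apply Measurable.real_toNNReal
    exact Measurable.ite measurableSet_Ici (Real.measurable_exp.comp measurable_neg) measurable_const
  have hrepr : (fun x : ℝ => ENNReal.ofReal (if 0 ≤ x then Real.exp (-x) else 0))
      = fun x => ((Real.toNNReal (if 0 ≤ x then Real.exp (-x) else 0) : ℝ≥0) : ℝ≥0∞) := rfl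
  rw [hrepr, integral_withDensity_eq_integral_smul hmeas g]
  have : (fun x => Real.toNNReal (if 0 ≤ x then Real.exp (-x) else 0) • g x)
      = Set.indicator (Set.Ici (0:ℝ)) (fun x => Real.exp (-x) * g x) := by
    funext x
    rw [NNReal.smul_def, smul_eq_mul]
    by_cases hx : (0:ℝ) ≤ x
    · rw [if_pos hx, Set.indicator_of_mem (Set.mem_Ici.mpr hx), Real.coe_toNNReal _ (Real.exp_nonneg _)]
    · rw [if_neg hx, Set.indicator_of_notMem (by simpa using hx)]; simp
  rw [this, integral_indicator measurableSet_Ici, integral_Ici_eq_integral_Ioi]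

lemma integrable_expMeasure_one (g : ℝ → ℝ) (hg : Measurable g)
    (hint : IntegrableOn (fun x => Real.exp (-x) * g x) (Set.Ioi 0)) :
    Integrable g (expMeasure 1) := by
  rw [expMeasure_one_repr]
  have hmeas : Measurable (fun x : ℝ => ENNReal.ofReal (if 0 ≤ x then Real.exp (-x) else 0)) := by
    apply Measurable.ennreal_ofReal
    exact Measurable.ite measurableSet_Ici (Real.measurable_exp.comp measurable_neg) measurable_const
  rw [integrable_withDensity_iff hmeas (ae_of_all _ fun x => ENNReal.ofReal_lt_top)]
  have : (fun x : ℝ => g x * (ENNReal.ofReal (if 0 ≤ x then Real.exp (-x) else 0)).toReal)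
      = Set.indicator (Set.Ici (0:ℝ)) (fun x => Real.exp (-x) * g x) := by
    funext x
    by_cases hx : (0:ℝ) ≤ x
    · rw [if_pos hx, Set.indicator_of_mem (Set.mem_Ici.mpr hx),
        ENNReal.toReal_ofReal (Real.exp_nonneg _), mul_comm]
    · rw [if_neg hx, Set.indicator_of_notMem (by simpa using hx)]; simp
  rw [this, integrable_indicator_iff measurableSet_Ici]
  rwa [← integrableOn_Ici_iff_integrableOn_Ioi] at hint

lemma exp_one_moment_one :
    (∫ x, x ∂(expMeasure 1) = 1) ∧ Integrable (fun x : ℝ => x) (expMeasure 1) := by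
  have hconv := Real.GammaIntegral_convergent (by norm_num : (0:ℝ) < 2)
  have hval := Real.Gamma_eq_integral (by norm_num : (0:ℝ) < 2)
  rw [Real.Gamma_two] at hval
  have heq : (fun x : ℝ => Real.exp (-x) * x ^ ((2:ℝ) - 1)) = fun x => Real.exp (-x) * x := by
    funext x; norm_num
  rw [heq] at hconv hval
  constructor
  · rw [integral_expMeasure_one]; exact hval.symm
  · exact integrable_expMeasure_one _ measurable_id hconv

lemma exp_one_moment_two :
    (∫ x, x ^ 2 ∂(expMeasure 1) = 2) ∧ Integrable (fun x : ℝ => x ^ 2) (expMeasure 1) := by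
  have hconv := Real.GammaIntegral_convergent (by norm_num : (0:ℝ) < 3)
  have hval := Real.Gamma_eq_integral (by norm_num : (0:ℝ) < 3)
  have h3 : Real.Gamma 3 = 2 := by
    rw [show (3:ℝ) = 2 + 1 by norm_num, Real.Gamma_add_one (by norm_num), Real.Gamma_two]
    norm_num
  rw [h3] at hval
  have heq : (fun x : ℝ => Real.exp (-x) * x ^ ((3:ℝ) - 1)) = fun x => Real.exp (-x) * x ^ 2 := by
    funext x
    norm_num
  rw [heq] at hconv hval
  constructor
  · rw [integral_expMeasure_one]; exact hval.symm
  · exact integrable_expMeasure_one _ (measurable_id.pow_const 2) hconv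

lemma indep_prod_integral {Ω : Type*} {m0 : MeasurableSpace Ω} {P : Measure Ω}
    [IsProbabilityMeasure P] {f : ℕ → Ω → ℝ} (hmeas : ∀ i, Measurable (f i))
    (hindep : iIndepFun f P)
    (hint : ∀ i, Integrable (f i) P) (s : Finset ℕ) :
    Integrable (∏ i ∈ s, f i) P ∧
      ∫ ω, (∏ i ∈ s, f i) ω ∂P = ∏ i ∈ s, ∫ ω, f i ω ∂P := by
  classical
  induction s using Finset.induction_on with
  | empty => exact ⟨by simp only [Finset.prod_empty]; exact integrable_const (1:ℝ), by simp⟩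
  | @insert a s ha ih =>
    have hIF : ProbabilityTheory.IndepFun (∏ j ∈ s, f j) (f a) P :=
      hindep.indepFun_finset_prod_of_notMem hmeas ha
    have hi : Integrable ((∏ j ∈ s, f j) * f a) P := hIF.integrable_mul ih.1 (hint a)
    have hv := hIF.integral_mul_eq_mul_integral ih.1.aestronglyMeasurable (hint a).aestronglyMeasurable
    rw [Finset.prod_insert ha, Finset.prod_insert ha, ← ih.2]
    constructor
    · have : f a * ∏ j ∈ s, f j = (∏ j ∈ s, f j) * f a := mul_comm _ _
      rw [this]; exact hi
    · have : f a * ∏ j ∈ s, f j = (∏ j ∈ s, f j) * f a := mul_comm _ _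
      rw [this]
      have hv' : ∫ ω, ((∏ j ∈ s, f j) * f a) ω ∂P
          = (∫ ω, (∏ j ∈ s, f j) ω ∂P) * ∫ ω, f a ω ∂P := hv
      simp only [Pi.mul_apply] at hv' ⊢
      rw [hv', mul_comm]

lemma sum_inv_sq_le (n : ℕ) :
    ∑ i ∈ Finset.Icc 1 n, (1:ℝ)/((i:ℝ)+1)^2 ≤ 1 - 1/((n:ℝ)+1) := by
  induction n with
  | zero => simp
  | succ n ih =>
    rw [Finset.sum_Icc_succ_top (Nat.succ_le_succ (Nat.zero_le n))]
    have h1 : (0:ℝ) < (n:ℝ) + 1 := by positivity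
    have h2 : (0:ℝ) < (n:ℝ) + 2 := by positivity
    have key : (1:ℝ)/(((n+1:ℕ):ℝ)+1)^2 ≤ 1/((n:ℝ)+1) - 1/((n:ℝ)+2) := by
      push_cast
      rw [div_sub_div _ _ (ne_of_gt h1) (ne_of_gt h2)]
      rw [div_le_div_iff₀ (by positivity) (by positivity)]
      ring_nf
      nlinarith [sq_nonneg ((n:ℝ)+1)]
    have : ((n+1:ℕ):ℝ) + 1 = (n:ℝ) + 2 := by push_cast; ring
    calc ∑ i ∈ Finset.Icc 1 n, (1:ℝ)/((i:ℝ)+1)^2 + (1:ℝ)/(((n+1:ℕ):ℝ)+1)^2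
        ≤ (1 - 1/((n:ℝ)+1)) + (1/((n:ℝ)+1) - 1/((n:ℝ)+2)) := add_le_add ih key
      _ = 1 - 1/((n:ℝ)+2) := by ring
      _ = 1 - 1/(((n+1:ℕ):ℝ)+1) := by rw [this]

lemma prod_sq_le (n : ℕ) :
    ∏ i ∈ Finset.Icc 1 n, ((1:ℝ) + 1/((i:ℝ)+1)^2) ≤ Real.exp 1 := by
  calc ∏ i ∈ Finset.Icc 1 n, ((1:ℝ) + 1/((i:ℝ)+1)^2)
      ≤ ∏ i ∈ Finset.Icc 1 n, Real.exp (1/((i:ℝ)+1)^2) := by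
        apply Finset.prod_le_prod
        · intro i _; positivity
        · intro i _
          have := Real.add_one_le_exp ((1:ℝ)/((i:ℝ)+1)^2)
          linarith
    _ = Real.exp (∑ i ∈ Finset.Icc 1 n, (1:ℝ)/((i:ℝ)+1)^2) := (Real.exp_sum _ _).symm
    _ ≤ Real.exp 1 := by
        apply Real.exp_le_exp.mpr
        have h := sum_inv_sq_le n
        have : (0:ℝ) < 1/((n:ℝ)+1) := by positivity
        linarith

theorem exponential_product_martingale_converges
    {Ω : Type*} {m0 : MeasurableSpace Ω} {P : Measure Ω} [IsProbabilityMeasure P]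
    (Z : ℕ → Ω → ℝ) (hZmeas : ∀ i, Measurable (Z i))
    (hindep : iIndepFun Z P)
    (hdist : ∀ i, Measure.map (Z i) P = expMeasure 1)
    (M : ℕ → Ω → ℝ)
    (hM : ∀ n ω, M n ω = ∏ i ∈ Finset.Icc 1 n, ((i : ℝ) + Z i ω) / ((i : ℝ) + 1)) :
    ∃ Mlim : Ω → ℝ,
      (∀ᵐ ω ∂P, Tendsto (fun n => M n ω) atTop (nhds (Mlim ω))) ∧
      Tendsto (fun n => ∫ ω, |M n ω - Mlim ω| ∂P) atTop (nhds 0) ∧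
      ∫ ω, Mlim ω ∂P = 1 := by
  classical
  haveI : IsProbabilityMeasure (expMeasure (1:ℝ)) := isProbabilityMeasure_expMeasure one_pos
  -- transfer of integrals along the law of `Z i`
  have hmapint : ∀ (i : ℕ) (g : ℝ → ℝ), Measurable g → Integrable g (expMeasure 1) →
      Integrable (fun ω => g (Z i ω)) P := by
    intro i g hg hgint
    rw [← hdist i] at hgint
    exact (integrable_map_measure hg.aestronglyMeasurable (hZmeas i).aemeasurable).mp hgint
  have hmapeq : ∀ (i : ℕ) (g : ℝ → ℝ), Measurable g →
      ∫ ω, g (Z i ω) ∂P = ∫ x, g x ∂(expMeasure 1) := by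
    intro i g hg
    rw [← hdist i, integral_map (hZmeas i).aemeasurable hg.aestronglyMeasurable]
  have hZint : ∀ i, Integrable (Z i) P := fun i =>
    hmapint i (fun x => x) measurable_id exp_one_moment_one.2
  have hZ1 : ∀ i, ∫ ω, Z i ω ∂P = 1 := fun i =>
    (hmapeq i (fun x => x) measurable_id).trans exp_one_moment_one.1
  have hZsqint : ∀ i, Integrable (fun ω => Z i ω ^ 2) P := fun i =>
    hmapint i (fun x => x ^ 2) (measurable_id.pow_const 2) exp_one_moment_two.2
  have hZ2 : ∀ i, ∫ ω, Z i ω ^ 2 ∂P = 2 := fun i =>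
    (hmapeq i (fun x => x ^ 2) (measurable_id.pow_const 2)).trans exp_one_moment_two.1
  -- the factors
  set X : ℕ → Ω → ℝ := fun i ω => ((i : ℝ) + Z i ω) / ((i : ℝ) + 1) with hXdef
  have hcne : ∀ i : ℕ, ((i:ℝ) + 1) ≠ 0 := fun i => by positivity
  have hXmeas : ∀ i, Measurable (X i) := fun i =>
    (measurable_const.add (hZmeas i)).div_const _
  have hXrepr : ∀ i, X i = fun ω => (i:ℝ)/((i:ℝ)+1) + Z i ω * (1/((i:ℝ)+1)) := by
    intro i; funext ω
    simp only [hXdef]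
    field_simp
  have hXint : ∀ i, Integrable (X i) P := by
    intro i
    rw [hXrepr i]
    exact (integrable_const _).add ((hZint i).mul_const _)
  have hX1 : ∀ i, ∫ ω, X i ω ∂P = 1 := by
    intro i
    have : ∫ ω, X i ω ∂P = ∫ ω, ((i:ℝ)/((i:ℝ)+1) + Z i ω * (1/((i:ℝ)+1))) ∂P := by
      congr 1; rw [hXrepr i]
    rw [this, integral_add (integrable_const _) ((hZint i).mul_const _),
      integral_const, integral_mul_const, hZ1 i]
    simp [measure_univ]
    field_simp
  have hXsqrepr : ∀ i, (fun ω => X i ω ^ 2) =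
      fun ω => (i:ℝ)^2/((i:ℝ)+1)^2 +
        (Z i ω * (2*(i:ℝ)/((i:ℝ)+1)^2) + Z i ω ^ 2 * (1/((i:ℝ)+1)^2)) := by
    intro i; funext ω
    simp only [hXdef]
    field_simp
    ring
  have hXsqint : ∀ i, Integrable (fun ω => X i ω ^ 2) P := by
    intro i
    rw [hXsqrepr i]
    exact (integrable_const _).add (((hZint i).mul_const _).add ((hZsqint i).mul_const _))
  have hXsq1 : ∀ i, ∫ ω, X i ω ^ 2 ∂P = 1 + 1/((i:ℝ)+1)^2 := by
    intro i
    have : ∫ ω, X i ω ^ 2 ∂P = ∫ ω, ((i:ℝ)^2/((i:ℝ)+1)^2 +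
        (Z i ω * (2*(i:ℝ)/((i:ℝ)+1)^2) + Z i ω ^ 2 * (1/((i:ℝ)+1)^2))) ∂P := by
      congr 1; rw [← hXsqrepr i]
    have hg1 : Integrable (fun ω => Z i ω * (2*(i:ℝ)/((i:ℝ)+1)^2)) P := (hZint i).mul_const _
    have hg2 : Integrable (fun ω => Z i ω ^ 2 * (1/((i:ℝ)+1)^2)) P := (hZsqint i).mul_const _
    have hg : Integrable (fun ω => Z i ω * (2*(i:ℝ)/((i:ℝ)+1)^2) + Z i ω ^ 2 * (1/((i:ℝ)+1)^2)) P :=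
      hg1.add hg2
    rw [this, integral_add (integrable_const _) hg, integral_add hg1 hg2,
      integral_const, integral_mul_const, integral_mul_const, hZ1 i, hZ2 i]
    simp [measure_univ]
    field_simp
    ring
  -- independence of the factors
  have hXindep : iIndepFun X P := by
    have := hindep.comp (fun i (t : ℝ) => ((i:ℝ) + t)/((i:ℝ)+1))
      (fun i => (measurable_const.add measurable_id).div_const _)
    exact this
  have hXsqindep : iIndepFun (fun i ω => X i ω ^ 2) P := by
    have := hindep.comp (fun i (t : ℝ) => (((i:ℝ) + t)/((i:ℝ)+1)) ^ 2)
      (fun i => ((measurable_const.add measurable_id).div_const _).pow_const 2)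
    exact this
  have hXsqmeas : ∀ i, Measurable (fun ω => X i ω ^ 2) := fun i => (hXmeas i).pow_const 2
  -- the product process
  set N : ℕ → Ω → ℝ := fun n => ∏ i ∈ Finset.Icc 1 n, X i with hNdef
  have hMN : ∀ n, M n = N n := by
    intro n; funext ω
    rw [hM n ω, hNdef]
    simp [Finset.prod_apply, hXdef]
  have hNint : ∀ n, Integrable (N n) P := fun n =>
    (indep_prod_integral hXmeas hXindep hXint _).1
  have hNint1 : ∀ n, ∫ ω, N n ω ∂P = 1 := by
    intro n
    rw [hNdef]
    rw [(indep_prod_integral hXmeas hXindep hXint _).2]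
    simp only [hX1]
    exact Finset.prod_const_one
  have hNsqeq : ∀ n, (fun ω => N n ω ^ 2) = ∏ i ∈ Finset.Icc 1 n, (fun ω => X i ω ^ 2) := by
    intro n; funext ω
    simp only [hNdef, Finset.prod_apply, ← Finset.prod_pow]
  have hNsqint : ∀ n, Integrable (fun ω => N n ω ^ 2) P := by
    intro n
    rw [hNsqeq n]
    exact (indep_prod_integral hXsqmeas hXsqindep hXsqint _).1
  have hNsqval : ∀ n, ∫ ω, N n ω ^ 2 ∂P ≤ Real.exp 1 := by
    intro n
    have h1 : ∫ ω, N n ω ^ 2 ∂P = ∏ i ∈ Finset.Icc 1 n, (1 + 1/((i:ℝ)+1)^2) := by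
      have h0 : ∫ ω, N n ω ^ 2 ∂P = ∫ ω, (∏ i ∈ Finset.Icc 1 n, (fun ω => X i ω ^ 2)) ω ∂P := by
        congr 1; rw [← hNsqeq n]
      rw [h0, (indep_prod_integral hXsqmeas hXsqindep hXsqint _).2]
      exact Finset.prod_congr rfl fun i _ => hXsq1 i
    rw [h1]
    exact prod_sq_le n
  -- the natural filtration
  set ℱ := Filtration.natural Z (fun i => (hZmeas i).stronglyMeasurable) with hFdef
  have hZF : ∀ i n, i ≤ n → StronglyMeasurable[ℱ n] (Z i) := by
    intro i n hin
    exact ((Filtration.stronglyAdapted_natural (fun i => (hZmeas i).stronglyMeasurable)) i).mono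
      (ℱ.mono hin)
  have hadp : StronglyAdapted ℱ N := by
    intro n
    have : Measurable[ℱ n] fun ω => ∏ i ∈ Finset.Icc 1 n, X i ω := by
      apply Finset.measurable_prod
      intro i hi
      have hz : Measurable[ℱ n] (Z i) := (hZF i n (Finset.mem_Icc.mp hi).2).measurable
      exact (measurable_const.add hz).div_const _
    have heq : N n = fun ω => ∏ i ∈ Finset.Icc 1 n, X i ω := by
      funext ω; simp [hNdef, Finset.prod_apply]
    rw [heq]
    exact this.stronglyMeasurable
  -- independence of `Z (n+1)` from `ℱ n`
  have hindepsig : ∀ n, Indep (MeasurableSpace.comap (Z (n+1)) inferInstance) (ℱ n) P := by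
    intro n
    have hii : iIndep (fun i => MeasurableSpace.comap (Z i) inferInstance) P :=
      (iIndepFun_iff_iIndep _ _ _).mp hindep
    have hle : ∀ i, MeasurableSpace.comap (Z i) inferInstance ≤ m0 := fun i =>
      measurable_iff_comap_le.mp (hZmeas i)
    have hdisj : Disjoint ({n+1} : Set ℕ) (Set.Iic n) := by
      simp only [Set.disjoint_singleton_left, Set.mem_Iic]
      omega
    have h := indep_iSup_of_disjoint hle hii hdisj
    have h1 : (⨆ i ∈ ({n+1} : Set ℕ), MeasurableSpace.comap (Z i) inferInstance)
        = MeasurableSpace.comap (Z (n+1)) inferInstance := by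
      simp
    have h2 : (⨆ i ∈ (Set.Iic n : Set ℕ), MeasurableSpace.comap (Z i) inferInstance)
        = ℱ n := by
      rw [hFdef]
      simp only [Filtration.natural, Set.mem_Iic]
    rwa [h1, h2] at h
  -- conditional expectation of the next factor
  have hcond : ∀ n, (P[X (n+1)|ℱ n]) =ᵐ[P] fun _ => 1 := by
    intro n
    have hsm : StronglyMeasurable[MeasurableSpace.comap (Z (n+1)) inferInstance] (X (n+1)) := by
      have hz : Measurable[MeasurableSpace.comap (Z (n+1)) inferInstance] (Z (n+1)) :=
        measurable_iff_comap_le.mpr le_rfl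
      exact ((measurable_const.add hz).div_const _).stronglyMeasurable
    have h := condExp_indep_eq (measurable_iff_comap_le.mp (hZmeas (n+1))) (ℱ.le n)
      hsm (hindepsig n)
    rw [hX1 (n+1)] at h
    exact h
  -- martingale property
  have hstep : ∀ n, N n =ᵐ[P] P[N (n+1)|ℱ n] := by
    intro n
    have hprod : N (n+1) = N n * X (n+1) := by
      rw [hNdef]
      exact Finset.prod_Icc_succ_top (Nat.succ_le_succ (Nat.zero_le n)) X
    have hmul := condExp_mul_of_stronglyMeasurable_left (hadp n)
      (by rw [← hprod]; exact hNint (n+1)) (hXint (n+1))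
    rw [← hprod] at hmul
    refine (EventuallyEq.symm ?_)
    refine hmul.trans ?_
    filter_upwards [hcond n] with ω hω
    simp only [Pi.mul_apply, hω, mul_one]
  have hmart : Martingale N ℱ P := martingale_nat hadp hNint hstep
  -- uniform integrability via the L² bound
  have hNmeas : ∀ n, Measurable (N n) := fun n => ((hadp n).measurable).mono (ℱ.le n) le_rfl
  have hlsq : ∀ n, ∫⁻ ω, (‖N n ω‖₊ : ℝ≥0∞) ^ 2 ∂P ≤ ENNReal.ofReal (Real.exp 1) := by
    intro n
    have h1 : ∫⁻ ω, (‖N n ω‖₊ : ℝ≥0∞) ^ 2 ∂P = ENNReal.ofReal (∫ ω, N n ω ^ 2 ∂P) := by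
      rw [ofReal_integral_eq_lintegral_ofReal (hNsqint n)
        (ae_of_all _ fun ω => sq_nonneg _)]
      refine lintegral_congr fun ω => ?_
      rw [← ENNReal.coe_pow, ← nnnorm_pow, ← enorm_eq_nnnorm, Real.enorm_eq_ofReal (sq_nonneg _)]
    rw [h1]
    exact ENNReal.ofReal_le_ofReal (hNsqval n)
  have hUI : UniformIntegrable N 1 P := by
    refine uniformIntegrable_of le_rfl ENNReal.one_ne_top
      (fun n => (hNmeas n).aestronglyMeasurable) ?_
    intro ε hε
    set C : ℝ≥0 := (Real.exp 1 / ε).toNNReal + 1 with hCdef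
    have hC0 : (C : ℝ≥0∞) ≠ 0 := by
      simp only [hCdef]
      intro h
      rw [ENNReal.coe_eq_zero] at h
      simpa using congrArg (· + (1:ℝ≥0)) h.symm
    have hCtop : (C : ℝ≥0∞) ≠ ⊤ := ENNReal.coe_ne_top
    refine ⟨C, fun n => ?_⟩
    have hpt : ∀ ω, (‖({ x | C ≤ ‖N n x‖₊ }.indicator (N n)) ω‖₊ : ℝ≥0∞)
        ≤ (C : ℝ≥0∞)⁻¹ * (‖N n ω‖₊ : ℝ≥0∞) ^ 2 := by
      intro ω
      by_cases hω : ω ∈ { x | C ≤ ‖N n x‖₊ }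
      · rw [Set.indicator_of_mem hω]
        have hx : (C : ℝ≥0∞) ≤ (‖N n ω‖₊ : ℝ≥0∞) := ENNReal.coe_le_coe.mpr hω
        calc (‖N n ω‖₊ : ℝ≥0∞) = (C : ℝ≥0∞)⁻¹ * ((C : ℝ≥0∞) * (‖N n ω‖₊ : ℝ≥0∞)) := by
              rw [← mul_assoc, ENNReal.inv_mul_cancel hC0 hCtop, one_mul]
          _ ≤ (C : ℝ≥0∞)⁻¹ * ((‖N n ω‖₊ : ℝ≥0∞) * (‖N n ω‖₊ : ℝ≥0∞)) :=
              mul_le_mul_right (mul_le_mul_left hx _) _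
          _ = (C : ℝ≥0∞)⁻¹ * (‖N n ω‖₊ : ℝ≥0∞) ^ 2 := by rw [sq]
      · rw [Set.indicator_of_notMem hω]
        simp
    calc eLpNorm ({ x | C ≤ ‖N n x‖₊ }.indicator (N n)) 1 P
        = ∫⁻ ω, (‖({ x | C ≤ ‖N n x‖₊ }.indicator (N n)) ω‖₊ : ℝ≥0∞) ∂P :=
          eLpNorm_one_eq_lintegral_enorm
      _ ≤ ∫⁻ ω, (C : ℝ≥0∞)⁻¹ * (‖N n ω‖₊ : ℝ≥0∞) ^ 2 ∂P := lintegral_mono hpt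
      _ = (C : ℝ≥0∞)⁻¹ * ∫⁻ ω, (‖N n ω‖₊ : ℝ≥0∞) ^ 2 ∂P := by
          rw [lintegral_const_mul _ (((hNmeas n).nnnorm.coe_nnreal_ennreal).pow_const 2)]
      _ ≤ (C : ℝ≥0∞)⁻¹ * ENNReal.ofReal (Real.exp 1) := by
          exact mul_le_mul_right (hlsq n) _
      _ ≤ ENNReal.ofReal ε := by
          have hkey : ENNReal.ofReal (Real.exp 1) ≤ (C : ℝ≥0∞) * ENNReal.ofReal ε := by
            have h1 : ENNReal.ofReal (Real.exp 1) =
                ENNReal.ofReal (Real.exp 1 / ε) * ENNReal.ofReal ε := by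
              rw [← ENNReal.ofReal_mul (by positivity), div_mul_cancel₀ _ (ne_of_gt hε)]
            rw [h1]
            apply mul_le_mul_left
            rw [ENNReal.ofReal]
            exact ENNReal.coe_le_coe.mpr (by simp [hCdef])
          calc (C : ℝ≥0∞)⁻¹ * ENNReal.ofReal (Real.exp 1)
              ≤ (C : ℝ≥0∞)⁻¹ * ((C : ℝ≥0∞) * ENNReal.ofReal ε) := mul_le_mul_right hkey _
            _ = ENNReal.ofReal ε := by
                rw [← mul_assoc, ENNReal.inv_mul_cancel hC0 hCtop, one_mul]
  -- conclusion
  set Mlim : Ω → ℝ := ℱ.limitProcess N P with hMlim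
  have hae : ∀ᵐ ω ∂P, Tendsto (fun n => N n ω) atTop (nhds (Mlim ω)) :=
    hmart.submartingale.ae_tendsto_limitProcess_of_uniformIntegrable hUI
  have hL1 : Tendsto (fun n => eLpNorm (N n - Mlim) 1 P) atTop (nhds 0) :=
    hmart.submartingale.tendsto_eLpNorm_one_limitProcess hUI
  have hMlimInt : Integrable Mlim P := by
    obtain ⟨R, hR⟩ := hUI.2.2
    exact (Filtration.memLp_limitProcess_of_eLpNorm_bdd hUI.1 hR).integrable le_rfl
  have hMlimMeas : AEStronglyMeasurable Mlim P := hMlimInt.aestronglyMeasurable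
  have habs : ∀ n, ∫ ω, |N n ω - Mlim ω| ∂P = (eLpNorm (N n - Mlim) 1 P).toReal := by
    intro n
    have h1 : ∫ ω, |N n ω - Mlim ω| ∂P = ∫ ω, ‖(N n - Mlim) ω‖ ∂P := by
      simp only [Pi.sub_apply, Real.norm_eq_abs]
    rw [h1, integral_norm_eq_lintegral_enorm
      (((hNmeas n).aestronglyMeasurable).sub hMlimMeas), eLpNorm_one_eq_lintegral_enorm]
  have hL1' : Tendsto (fun n => ∫ ω, |N n ω - Mlim ω| ∂P) atTop (nhds 0) := by
    have := (ENNReal.tendsto_toReal (by simp : (0:ℝ≥0∞) ≠ ⊤)).comp hL1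
    simp only [ENNReal.toReal_zero] at this
    refine Tendsto.congr (fun n => (habs n).symm) this
  have hintlim : ∫ ω, Mlim ω ∂P = 1 := by
    have ht : Tendsto (fun n => ∫ ω, N n ω ∂P) atTop (nhds (∫ ω, Mlim ω ∂P)) := by
      rw [tendsto_iff_norm_sub_tendsto_zero]
      refine squeeze_zero (fun n => norm_nonneg _) (fun n => ?_) hL1'
      rw [← integral_sub (hNint n) hMlimInt]
      calc ‖∫ ω, (N n ω - Mlim ω) ∂P‖ ≤ ∫ ω, ‖N n ω - Mlim ω‖ ∂P :=
            norm_integral_le_integral_norm _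
        _ = ∫ ω, |N n ω - Mlim ω| ∂P := by
            simp only [Real.norm_eq_abs]
    have hconst : Tendsto (fun _ : ℕ => (1:ℝ)) atTop (nhds 1) := tendsto_const_nhds
    exact tendsto_nhds_unique (ht.congr (fun n => hNint1 n)) hconst
  refine ⟨Mlim, ?_, ?_, hintlim⟩
  · simp only [hMN]; exact hae
  · simp only [hMN]; exact hL1'
end

section
/- Let Z be a standard exponential random variable and m ≥ 1. Define a_m = E(√((m+Z)/(m+1))). Then 1 - a_m = O(1/m²) as m → ∞; in particular ∑_{m=1}^∞ (1 - a_m) < ∞. -/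
open MeasureTheory Filter
open scoped BigOperators

private lemma exp_pow_integrableOn (n : ℕ) :
    IntegrableOn (fun z : ℝ => Real.exp (-z) * z ^ n) (Set.Ioi 0) := by
  have h := Real.GammaIntegral_convergent (s := (n : ℝ) + 1) (by positivity)
  refine h.congr_fun (fun x _ => ?_) measurableSet_Ioi
  simp only [add_sub_cancel_right, Real.rpow_natCast]

private lemma exp_pow_integral (n : ℕ) :
    ∫ z in Set.Ioi (0:ℝ), Real.exp (-z) * z ^ n = (Nat.factorial n : ℝ) := by
  have h := Real.Gamma_eq_integral (s := (n : ℝ) + 1) (by positivity)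
  simp only [add_sub_cancel_right, Real.rpow_natCast] at h
  rw [← h]
  exact_mod_cast Real.Gamma_nat_eq_factorial n

private lemma sqrt_bound {u : ℝ} (hu : -1 ≤ u) :
    |1 - Real.sqrt (1 + u) + u / 2| ≤ u ^ 2 / 2 := by
  have h0 : (0:ℝ) ≤ 1 + u := by linarith
  rw [abs_le]
  constructor
  · -- sqrt (1+u) ≤ 1 + u/2 + u^2/2
    have h1 : Real.sqrt (1 + u) ≤ 1 + u / 2 := by
      rw [show (1:ℝ) + u / 2 = Real.sqrt ((1 + u / 2) ^ 2) from
        (Real.sqrt_sq (by linarith)).symm]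
      apply Real.sqrt_le_sqrt; nlinarith [sq_nonneg u]
    nlinarith [sq_nonneg u]
  · -- 1 + u/2 - u^2/2 ≤ sqrt (1+u)
    rcases le_or_gt (1 + u / 2 - u ^ 2 / 2) 0 with h | h
    · nlinarith [Real.sqrt_nonneg (1 + u)]
    · have hu2 : u ≤ 2 := by nlinarith
      have h2 : (1 + u / 2 - u ^ 2 / 2) ^ 2 ≤ 1 + u := by
        nlinarith [mul_nonneg (mul_nonneg (sq_nonneg u)
          (by linarith : (0:ℝ) ≤ 3 - u)) h0]
      have := Real.le_sqrt_of_sq_le h2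
      linarith

theorem one_sub_a_isBigO_inv_sq
    (a : ℕ → ℝ)
    (ha : ∀ m, a m = ∫ z in Set.Ioi (0:ℝ),
      Real.exp (-z) * Real.sqrt (((m : ℝ) + z) / ((m : ℝ) + 1))) :
    (fun m : ℕ => 1 - a m) =O[atTop] (fun m : ℕ => 1 / (m : ℝ) ^ 2) ∧
      Summable (fun m : ℕ => 1 - a m) := by
  have key : ∀ m : ℕ, |1 - a m| ≤ 1 / (2 * ((m : ℝ) + 1) ^ 2) := by
    intro m
    set M : ℝ := (m : ℝ) + 1 with hMdef
    have hM0 : (0:ℝ) < M := by positivity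
    have hM1 : (1:ℝ) ≤ M := by rw [hMdef]; have := Nat.cast_nonneg (α := ℝ) m; linarith
    have h0 := exp_pow_integrableOn 0
    have h1 := exp_pow_integrableOn 1
    have h2 := exp_pow_integrableOn 2
    -- integrability of the sqrt integrand
    have hg : IntegrableOn
        (fun z : ℝ => Real.exp (-z) * Real.sqrt (((m : ℝ) + z) / ((m : ℝ) + 1)))
        (Set.Ioi 0) := by
      refine Integrable.mono' (h0.add h1) ?_ ?_
      · exact (Continuous.aestronglyMeasurable (by fun_prop))
      · rw [ae_restrict_iff' measurableSet_Ioi]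
        refine Filter.Eventually.of_forall (fun z hz => ?_)
        have hz0 : (0:ℝ) < z := hz
        have hsle : Real.sqrt (((m : ℝ) + z) / ((m : ℝ) + 1)) ≤ 1 + z := by
          rw [show (1:ℝ) + z = Real.sqrt ((1 + z) ^ 2) from
            (Real.sqrt_sq (by linarith)).symm]
          apply Real.sqrt_le_sqrt
          rw [div_le_iff₀ (by positivity)]
          nlinarith [Nat.cast_nonneg (α := ℝ) m, mul_nonneg (sq_nonneg z) (Nat.cast_nonneg (α := ℝ) m), mul_nonneg hz0.le (Nat.cast_nonneg (α := ℝ) m)]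
        have hsnn : 0 ≤ Real.sqrt (((m : ℝ) + z) / ((m : ℝ) + 1)) := Real.sqrt_nonneg _
        have hexp : (0:ℝ) < Real.exp (-z) := Real.exp_pos _
        rw [Real.norm_eq_abs, abs_of_nonneg (by positivity)]
        calc Real.exp (-z) * Real.sqrt (((m : ℝ) + z) / ((m : ℝ) + 1))
            ≤ Real.exp (-z) * (1 + z) := by nlinarith
          _ = Real.exp (-z) * z ^ 0 + Real.exp (-z) * z ^ 1 := by ring
    -- integrability of exp(-z)*(z-1)
    have hzm : IntegrableOn (fun z : ℝ => Real.exp (-z) * (z - 1)) (Set.Ioi 0) := by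
      have e : (fun z : ℝ => Real.exp (-z) * (z - 1))
          = fun z => Real.exp (-z) * z ^ 1 - Real.exp (-z) * z ^ 0 := by
        funext z; ring
      rw [e]; exact h1.sub h0
    -- integrability of exp(-z)*(z-1)^2
    have hquad : IntegrableOn (fun z : ℝ => Real.exp (-z) * (z - 1) ^ 2) (Set.Ioi 0) := by
      have e : (fun z : ℝ => Real.exp (-z) * (z - 1) ^ 2)
          = fun z => (Real.exp (-z) * z ^ 2 - 2 * (Real.exp (-z) * z ^ 1))
            + Real.exp (-z) * z ^ 0 := by
        funext z; ring
      rw [e]; exact (h2.sub (h1.const_mul 2)).add h0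
    have hzero : ∫ z in Set.Ioi (0:ℝ), Real.exp (-z) * (z - 1) = 0 := by
      have e : (fun z : ℝ => Real.exp (-z) * (z - 1))
          = fun z => Real.exp (-z) * z ^ 1 - Real.exp (-z) * z ^ 0 := by
        funext z; ring
      rw [e, integral_sub h1 h0, exp_pow_integral 1, exp_pow_integral 0]
      norm_num
    have hone : ∫ z in Set.Ioi (0:ℝ), Real.exp (-z) * (z - 1) ^ 2 = 1 := by
      have e : (fun z : ℝ => Real.exp (-z) * (z - 1) ^ 2)
          = fun z => (Real.exp (-z) * z ^ 2 - 2 * (Real.exp (-z) * z ^ 1))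
            + Real.exp (-z) * z ^ 0 := by
        funext z; ring
      have hsub : Integrable
          (fun z : ℝ => Real.exp (-z) * z ^ 2 - 2 * (Real.exp (-z) * z ^ 1))
          (volume.restrict (Set.Ioi 0)) := h2.sub (h1.const_mul 2)
      have hcm : Integrable (fun z : ℝ => 2 * (Real.exp (-z) * z ^ 1))
          (volume.restrict (Set.Ioi 0)) := h1.const_mul 2
      rw [e, integral_add hsub h0, integral_sub h2 hcm, integral_const_mul,
        exp_pow_integral 2, exp_pow_integral 1, exp_pow_integral 0]
      norm_num
    -- main identity
    have hmain : 1 - a m = ∫ z in Set.Ioi (0:ℝ),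
        Real.exp (-z) * (1 - Real.sqrt (((m : ℝ) + z) / ((m : ℝ) + 1))
          + (z - 1) / (2 * M)) := by
      have e : (fun z : ℝ => Real.exp (-z) * (1 - Real.sqrt (((m : ℝ) + z) / ((m : ℝ) + 1))
            + (z - 1) / (2 * M)))
          = fun z => (Real.exp (-z) * z ^ 0
              - Real.exp (-z) * Real.sqrt (((m : ℝ) + z) / ((m : ℝ) + 1)))
            + (2 * M)⁻¹ * (Real.exp (-z) * (z - 1)) := by
        funext z; field_simp
      have hsub : Integrable
          (fun z : ℝ => Real.exp (-z) * z ^ 0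
            - Real.exp (-z) * Real.sqrt (((m : ℝ) + z) / ((m : ℝ) + 1)))
          (volume.restrict (Set.Ioi 0)) := h0.sub hg
      have hcm : Integrable
          (fun z : ℝ => (2 * M)⁻¹ * (Real.exp (-z) * (z - 1)))
          (volume.restrict (Set.Ioi 0)) := hzm.const_mul _
      rw [e, integral_add hsub hcm, integral_sub h0 hg,
        integral_const_mul, hzero, exp_pow_integral 0, ha m]
      norm_num
    -- the bound
    have hdom : IntegrableOn
        (fun z : ℝ => Real.exp (-z) * ((z - 1) ^ 2 / (2 * M ^ 2))) (Set.Ioi 0) := by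
      have e : (fun z : ℝ => Real.exp (-z) * ((z - 1) ^ 2 / (2 * M ^ 2)))
          = fun z => (2 * M ^ 2)⁻¹ * (Real.exp (-z) * (z - 1) ^ 2) := by
        funext z; ring
      rw [e]; exact hquad.const_mul _
    have hb : |1 - a m| ≤ ∫ z in Set.Ioi (0:ℝ),
        Real.exp (-z) * ((z - 1) ^ 2 / (2 * M ^ 2)) := by
      rw [hmain, ← Real.norm_eq_abs]
      refine norm_integral_le_of_norm_le hdom ?_
      rw [ae_restrict_iff' measurableSet_Ioi]
      refine Filter.Eventually.of_forall (fun z hz => ?_)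
      have hz0 : (0:ℝ) < z := hz
      set u : ℝ := (z - 1) / M with hu_def
      have hu : -1 ≤ u := by
        rw [hu_def, le_div_iff₀ hM0]
        nlinarith
      have hsq : ((m : ℝ) + z) / ((m : ℝ) + 1) = 1 + u := by
        rw [hu_def, hMdef]; field_simp; ring
      have huhalf : (z - 1) / (2 * M) = u / 2 := by
        rw [hu_def, div_div, mul_comm M 2]
      have hub : (z - 1) ^ 2 / (2 * M ^ 2) = u ^ 2 / 2 := by
        rw [hu_def, div_pow, div_div, mul_comm (M ^ 2) 2]
      rw [hsq, huhalf, hub, Real.norm_eq_abs, abs_mul,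
        abs_of_pos (Real.exp_pos _)]
      exact mul_le_mul_of_nonneg_left (sqrt_bound hu) (Real.exp_pos _).le
    have hval : ∫ z in Set.Ioi (0:ℝ),
        Real.exp (-z) * ((z - 1) ^ 2 / (2 * M ^ 2)) = 1 / (2 * M ^ 2) := by
      have e : (fun z : ℝ => Real.exp (-z) * ((z - 1) ^ 2 / (2 * M ^ 2)))
          = fun z => (2 * M ^ 2)⁻¹ * (Real.exp (-z) * (z - 1) ^ 2) := by
        funext z; ring
      rw [e, integral_const_mul, hone]
      field_simp
    rw [hval] at hb
    exact hb
  constructor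
  · rw [Asymptotics.isBigO_iff]
    refine ⟨1, ?_⟩
    filter_upwards [eventually_ge_atTop 1] with m hm
    have hm1 : (1:ℝ) ≤ (m:ℝ) := by exact_mod_cast hm
    have h := key m
    rw [Real.norm_eq_abs, Real.norm_eq_abs]
    calc |1 - a m| ≤ 1 / (2 * ((m:ℝ) + 1) ^ 2) := h
      _ ≤ 1 / (m:ℝ) ^ 2 := by
        rw [div_le_div_iff₀ (by positivity) (by positivity)]; nlinarith
      _ ≤ 1 * |1 / (m:ℝ) ^ 2| := by
        rw [one_mul, abs_of_pos (by positivity)]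
  · have hsum : Summable (fun m : ℕ => 1 / (2 * ((m:ℝ) + 1) ^ 2)) := by
      have h := (Real.summable_one_div_nat_pow (p := 2)).mpr one_lt_two
      have h2 := (summable_nat_add_iff 1).mpr h
      have := h2.mul_left (1/2 : ℝ)
      refine this.congr (fun n => ?_)
      push_cast
      field_simp
    refine Summable.of_abs ?_
    exact Summable.of_nonneg_of_le (fun n => abs_nonneg _) key hsum
end

section
/- Let U_n, U_{n+1}, … be i.i.d. uniform random variables on [0,1], t_n > 0, and define T_n = t_n and T_{m+1} = ((m+2)/(m+1)) · max(m/(m+1), U_m) · T_m for m ≥ n. Then T_m converges almost surely to a positive random variable T_∞ with t_n · n/(n+1) ≤ E(T_∞) ≤ t_n · (n/(n+1)) e^{1/(2n)}. -/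
open MeasureTheory ProbabilityTheory Filter
open scoped BigOperators ENNReal NNReal Topology

noncomputable def fidC (k : ℕ) : ℝ := k / (k+1)
noncomputable def fidMu (k : ℕ) : ℝ := (((k:ℝ)+2)/((k:ℝ)+1)) * ((1 + (fidC k)^2)/2)
noncomputable def fidD (k : ℕ) : ℝ := ((k:ℝ)*((k:ℝ)+2))/(((k:ℝ)+1)^2)
noncomputable def fidR (k : ℕ) : ℝ := 1 + 1/(2*(k:ℝ)*((k:ℝ)+1))

noncomputable def fidH (k : ℕ) (x : ℝ) : ℝ := (((k:ℝ)+2)/((k:ℝ)+1)) * max (fidC k) (min 1 x)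
noncomputable def fidF {Ω : Type*} (U : ℕ → Ω → ℝ) (k : ℕ) (ω : Ω) : ℝ := fidH k (U k ω)
noncomputable def fidG {Ω : Type*} (U : ℕ → Ω → ℝ) (k : ℕ) (ω : Ω) : ℝ := fidF U k ω / fidMu k
noncomputable def fidM {Ω : Type*} (U : ℕ → Ω → ℝ) (n m : ℕ) (ω : Ω) : ℝ :=
  ∏ k ∈ Finset.Ico n (m+1), fidG U k ω
noncomputable def fidP (n m : ℕ) : ℝ := ∏ k ∈ Finset.Ico n m, fidMu k

lemma fidC_nonneg (k : ℕ) : 0 ≤ fidC k := by unfold fidC; positivity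

lemma fidC_le_one (k : ℕ) : fidC k ≤ 1 := by
  unfold fidC
  rw [div_le_one (by positivity)]; linarith

lemma fidMu_pos (k : ℕ) : 0 < fidMu k := by unfold fidMu; positivity

lemma fidMu_ge_half (k : ℕ) : 1/2 ≤ fidMu k := by
  unfold fidMu
  have h1 : (1:ℝ) ≤ ((k:ℝ)+2)/((k:ℝ)+1) := by
    rw [le_div_iff₀ (by positivity)]; linarith
  have h2 : (1:ℝ)/2 ≤ (1 + (fidC k)^2)/2 := by
    have := fidC_nonneg k; nlinarith
  calc (1:ℝ)/2 ≤ (1 + (fidC k)^2)/2 := h2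
    _ = 1 * ((1 + (fidC k)^2)/2) := by ring
    _ ≤ _ := by
        apply mul_le_mul_of_nonneg_right h1
        have := fidC_nonneg k; positivity

lemma fidMu_eq (k : ℕ) (hk : 1 ≤ k) : fidMu k = fidD k * fidR k := by
  have hk' : (1:ℝ) ≤ (k:ℝ) := by exact_mod_cast hk
  unfold fidMu fidD fidR fidC
  have h1 : (k:ℝ) ≠ 0 := by linarith
  have h2 : (k:ℝ)+1 ≠ 0 := by linarith
  field_simp
  ring

lemma fidD_nonneg (k : ℕ) : 0 ≤ fidD k := by unfold fidD; positivity

lemma fidR_one_le (k : ℕ) (hk : 1 ≤ k) : 1 ≤ fidR k := by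
  have hk' : (1:ℝ) ≤ (k:ℝ) := by exact_mod_cast hk
  unfold fidR
  have h : (0:ℝ) ≤ 1/(2*(k:ℝ)*((k:ℝ)+1)) := by positivity
  linarith

lemma fid_prodD (n m : ℕ) (hn : 1 ≤ n) (h : n ≤ m) :
    ∏ k ∈ Finset.Ico n m, fidD k = ((n:ℝ)*((m:ℝ)+1))/(((n:ℝ)+1)*(m:ℝ)) := by
  induction m, h using Nat.le_induction with
  | base =>
    have hn' : (1:ℝ) ≤ (n:ℝ) := by exact_mod_cast hn
    rw [Finset.Ico_self, Finset.prod_empty]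
    field_simp
  | succ m hm ih =>
    have hm1 : 1 ≤ m := le_trans hn hm
    have hm' : (1:ℝ) ≤ (m:ℝ) := by exact_mod_cast hm1
    have hn' : (1:ℝ) ≤ (n:ℝ) := by exact_mod_cast hn
    rw [Finset.prod_Ico_succ_top hm, ih]
    unfold fidD
    have h1 : (m:ℝ) ≠ 0 := by linarith
    have h2 : (m:ℝ)+1 ≠ 0 := by linarith
    have h3 : (n:ℝ)+1 ≠ 0 := by linarith
    push_cast
    field_simp
    ring

lemma fid_prodR_le (n m : ℕ) (hn : 1 ≤ n) (h : n ≤ m) :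
    ∏ k ∈ Finset.Ico n m, fidR k ≤ Real.exp (1/(2*(n:ℝ)) - 1/(2*(m:ℝ))) := by
  induction m, h using Nat.le_induction with
  | base => simp
  | succ m hm ih =>
    have hm1 : 1 ≤ m := le_trans hn hm
    have hm' : (1:ℝ) ≤ (m:ℝ) := by exact_mod_cast hm1
    rw [Finset.prod_Ico_succ_top hm]
    have hRle : fidR m ≤ Real.exp (1/(2*(m:ℝ)) - 1/(2*((m:ℝ)+1))) := by
      have heq : fidR m = (1/(2*(m:ℝ)) - 1/(2*((m:ℝ)+1))) + 1 := by
        unfold fidR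
        have h1 : (m:ℝ) ≠ 0 := by linarith
        have h2 : (m:ℝ)+1 ≠ 0 := by linarith
        field_simp
        ring
      rw [heq]
      exact Real.add_one_le_exp _
    have hprod_nonneg : 0 ≤ ∏ k ∈ Finset.Ico n m, fidR k := by
      apply Finset.prod_nonneg
      intro k hk
      have : 1 ≤ k := le_trans hn (Finset.mem_Ico.mp hk).1
      linarith [fidR_one_le k this]
    calc (∏ k ∈ Finset.Ico n m, fidR k) * fidR m
        ≤ Real.exp (1/(2*(n:ℝ)) - 1/(2*(m:ℝ))) * Real.exp (1/(2*(m:ℝ)) - 1/(2*((m:ℝ)+1))) := by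
          apply mul_le_mul ih hRle _ (Real.exp_nonneg _)
          have := fidR_one_le m hm1; linarith
      _ = Real.exp (1/(2*(n:ℝ)) - 1/(2*((m:ℝ)+1))) := by
          rw [← Real.exp_add]; ring_nf
      _ = _ := by push_cast; ring_nf

lemma fidR_prod_nonneg (n m : ℕ) (hn : 1 ≤ n) : 0 ≤ ∏ k ∈ Finset.Ico n m, fidR k := by
  apply Finset.prod_nonneg
  intro k hk
  have : 1 ≤ k := le_trans hn (Finset.mem_Ico.mp hk).1
  linarith [fidR_one_le k this]

lemma fidH_meas (k : ℕ) : Measurable (fidH k) := by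
  unfold fidH
  exact (measurable_const.max (measurable_const.min measurable_id)).const_mul _

lemma fidH_lb (k : ℕ) (x : ℝ) : fidD k ≤ fidH k x := by
  unfold fidH fidD
  have h1 : fidC k ≤ max (fidC k) (min 1 x) := le_max_left _ _
  have h2 : (0:ℝ) ≤ ((k:ℝ)+2)/((k:ℝ)+1) := by positivity
  calc ((k:ℝ)*((k:ℝ)+2))/(((k:ℝ)+1)^2) = (((k:ℝ)+2)/((k:ℝ)+1)) * fidC k := by
        unfold fidC; field_simp
    _ ≤ _ := mul_le_mul_of_nonneg_left h1 h2

lemma fidH_ub (k : ℕ) (x : ℝ) : fidH k x ≤ 2 := by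
  unfold fidH
  have h1 : max (fidC k) (min 1 x) ≤ 1 := max_le (fidC_le_one k) (min_le_left _ _)
  have h2 : ((k:ℝ)+2)/((k:ℝ)+1) ≤ 2 := by
    rw [div_le_iff₀ (by positivity)]; linarith
  have h3 : (0:ℝ) ≤ ((k:ℝ)+2)/((k:ℝ)+1) := by positivity
  calc (((k:ℝ)+2)/((k:ℝ)+1)) * max (fidC k) (min 1 x)
      ≤ (((k:ℝ)+2)/((k:ℝ)+1)) * 1 := mul_le_mul_of_nonneg_left h1 h3
    _ ≤ 2 := by linarith

lemma fidH_nonneg (k : ℕ) (x : ℝ) : 0 ≤ fidH k x :=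
  le_trans (fidD_nonneg k) (fidH_lb k x)

lemma fidF_nonneg {Ω : Type*} (U : ℕ → Ω → ℝ) (k : ℕ) (ω : Ω) : 0 ≤ fidF U k ω :=
  fidH_nonneg k _

lemma fidF_ub {Ω : Type*} (U : ℕ → Ω → ℝ) (k : ℕ) (ω : Ω) : fidF U k ω ≤ 2 :=
  fidH_ub k _

lemma fidG_nonneg {Ω : Type*} (U : ℕ → Ω → ℝ) (k : ℕ) (ω : Ω) : 0 ≤ fidG U k ω :=
  div_nonneg (fidH_nonneg k _) (fidMu_pos k).le

lemma fidG_le_four {Ω : Type*} (U : ℕ → Ω → ℝ) (k : ℕ) (ω : Ω) : fidG U k ω ≤ 4 := by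
  unfold fidG
  rw [div_le_iff₀ (fidMu_pos k)]
  have h1 := fidH_ub k (U k ω)
  have h2 := fidMu_ge_half k
  unfold fidF
  nlinarith

lemma fidM_nonneg {Ω : Type*} (U : ℕ → Ω → ℝ) (n m : ℕ) (ω : Ω) : 0 ≤ fidM U n m ω :=
  Finset.prod_nonneg fun k _ => fidG_nonneg U k ω

lemma fidM_le {Ω : Type*} (U : ℕ → Ω → ℝ) (n m : ℕ) (ω : Ω) : fidM U n m ω ≤ 4^(m+1) := by
  unfold fidM
  calc (∏ k ∈ Finset.Ico n (m+1), fidG U k ω) ≤ ∏ k ∈ Finset.Ico n (m+1), (4:ℝ) := by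
        apply Finset.prod_le_prod (fun k _ => fidG_nonneg U k ω) (fun k _ => fidG_le_four U k ω)
    _ = 4^(Finset.Ico n (m+1)).card := by rw [Finset.prod_const]
    _ ≤ 4^(m+1) := by
        apply pow_le_pow_right₀ (by norm_num)
        rw [Nat.card_Ico]; omega

lemma aux_max_integral {c : ℝ} (h0 : 0 ≤ c) (h1 : c ≤ 1) :
    ∫ x in Set.Icc (0:ℝ) 1, max c x = (1 + c^2)/2 := by
  have hcont : Continuous fun x : ℝ => max c x := continuous_const.max continuous_id
  have h2 : ∫ x in Set.Icc (0:ℝ) 1, max c x = ∫ x in (0:ℝ)..1, max c x := by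
    rw [MeasureTheory.integral_Icc_eq_integral_Ioc, intervalIntegral.integral_of_le zero_le_one]
  have h3 : ∫ x in (0:ℝ)..c, max c x = c * c := by
    have : ∫ x in (0:ℝ)..c, max c x = ∫ x in (0:ℝ)..c, c := by
      refine intervalIntegral.integral_congr fun x hx => ?_
      rw [Set.uIcc_of_le h0] at hx
      exact max_eq_left hx.2
    rw [this, intervalIntegral.integral_const, smul_eq_mul]; ring
  have h4 : ∫ x in c..(1:ℝ), max c x = (1 - c^2)/2 := by
    have : ∫ x in c..(1:ℝ), max c x = ∫ x in c..(1:ℝ), x := by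
      refine intervalIntegral.integral_congr fun x hx => ?_
      rw [Set.uIcc_of_le h1] at hx
      exact max_eq_right hx.1
    rw [this, integral_id]; norm_num
  have h5 := intervalIntegral.integral_add_adjacent_intervals
    (a := (0:ℝ)) (b := c) (c := 1) (f := fun x => max c x)
    (hcont.intervalIntegrable (μ := volume) 0 c) (hcont.intervalIntegrable (μ := volume) c 1)
  rw [h2, ← h5, h3, h4]; ring

theorem uniform_fiducial_limit
    {Ω : Type*} {m0 : MeasurableSpace Ω} {P : Measure Ω} [IsProbabilityMeasure P]
    (U : ℕ → Ω → ℝ) (hUmeas : ∀ m, Measurable (U m))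
    (hindep : iIndepFun U P)
    (hdist : ∀ m, Measure.map (U m) P = volume.restrict (Set.Icc (0:ℝ) 1))
    (n : ℕ) (hn : 1 ≤ n) (tn : ℝ) (htn : 0 < tn)
    (T : ℕ → Ω → ℝ) (hTn : ∀ ω, T n ω = tn)
    (hrec : ∀ m ≥ n, ∀ ω, T (m + 1) ω =
      (((m : ℝ) + 2) / ((m : ℝ) + 1)) * max ((m : ℝ) / ((m : ℝ) + 1)) (U m ω) * T m ω) :
    ∃ Tlim : Ω → ℝ,
      (∀ᵐ ω ∂P, Tendsto (fun m => T m ω) atTop (nhds (Tlim ω)) ∧ 0 < Tlim ω) ∧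
      tn * ((n : ℝ) / ((n : ℝ) + 1)) ≤ ∫ ω, Tlim ω ∂P ∧
      ∫ ω, Tlim ω ∂P ≤ tn * ((n : ℝ) / ((n : ℝ) + 1)) * Real.exp (1 / (2 * (n : ℝ))) := by
  have hn' : (1:ℝ) ≤ (n:ℝ) := by exact_mod_cast hn
  have hnpos : (0:ℝ) < n := by linarith
  -- the constant `tn * n/(n+1)`
  set c0 : ℝ := tn * ((n:ℝ)/((n:ℝ)+1)) with hc0
  have hc0pos : 0 < c0 := by rw [hc0]; positivity
  -- product formula for T
  have hTprod : ∀ m, n ≤ m → ∀ ω, T m ω =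
      tn * ∏ k ∈ Finset.Ico n m, (((k:ℝ)+2)/((k:ℝ)+1)) * max ((k:ℝ)/((k:ℝ)+1)) (U k ω) := by
    intro m hm
    induction m, hm using Nat.le_induction with
    | base => intro ω; rw [hTn ω, Finset.Ico_self, Finset.prod_empty, mul_one]
    | succ m hm ih =>
      intro ω
      rw [hrec m hm ω, ih ω, Finset.prod_Ico_succ_top hm]
      ring
  -- a.e. U ∈ [0,1]
  have hU01 : ∀ᵐ ω ∂P, ∀ k, U k ω ∈ Set.Icc (0:ℝ) 1 := by
    rw [ae_all_iff]
    intro k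
    have h1 : P (U k ⁻¹' (Set.Icc (0:ℝ) 1)) = 1 := by
      have h2 : Measure.map (U k) P (Set.Icc (0:ℝ) 1) = P (U k ⁻¹' (Set.Icc (0:ℝ) 1)) :=
        Measure.map_apply (hUmeas k) measurableSet_Icc
      rw [hdist k] at h2
      rw [← h2]
      simp [Real.volume_Icc]
    have h2 : P {ω | ¬ U k ω ∈ Set.Icc (0:ℝ) 1} = 0 := by
      have hcompl := prob_compl_eq_zero_iff
        (μ := P) (s := U k ⁻¹' (Set.Icc (0:ℝ) 1))
        ((measurableSet_Icc).preimage (hUmeas k))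
      have : P (U k ⁻¹' (Set.Icc (0:ℝ) 1))ᶜ = 0 := hcompl.mpr h1
      exact this
    exact h2
  -- pointwise lower bound on the true factors
  have hreal_lb : ∀ (k : ℕ) (ω : Ω),
      fidD k ≤ (((k:ℝ)+2)/((k:ℝ)+1)) * max ((k:ℝ)/((k:ℝ)+1)) (U k ω) := by
    intro k ω
    have h1 : (k:ℝ)/((k:ℝ)+1) ≤ max ((k:ℝ)/((k:ℝ)+1)) (U k ω) := le_max_left _ _
    have h2 : (0:ℝ) ≤ ((k:ℝ)+2)/((k:ℝ)+1) := by positivity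
    calc fidD k = (((k:ℝ)+2)/((k:ℝ)+1)) * ((k:ℝ)/((k:ℝ)+1)) := by
          unfold fidD; field_simp
      _ ≤ _ := mul_le_mul_of_nonneg_left h1 h2
  have hAge : ∀ m, n ≤ m → (n:ℝ)/((n:ℝ)+1) ≤ ((n:ℝ)*((m:ℝ)+1))/(((n:ℝ)+1)*(m:ℝ)) := by
    intro m hm
    have hm' : (1:ℝ) ≤ (m:ℝ) := le_trans hn' (by exact_mod_cast hm)
    rw [div_le_div_iff₀ (by positivity) (by positivity)]
    nlinarith
  -- deterministic lower bound
  have hTlb : ∀ m, n ≤ m → ∀ ω, c0 ≤ T m ω := by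
    intro m hm ω
    rw [hTprod m hm ω, hc0]
    have h1 : ∏ k ∈ Finset.Ico n m, fidD k ≤
        ∏ k ∈ Finset.Ico n m, (((k:ℝ)+2)/((k:ℝ)+1)) * max ((k:ℝ)/((k:ℝ)+1)) (U k ω) :=
      Finset.prod_le_prod (fun k _ => fidD_nonneg k) (fun k _ => hreal_lb k ω)
    have h2 := fid_prodD n m hn hm
    have h3 := hAge m hm
    have : (n:ℝ)/((n:ℝ)+1) ≤
        ∏ k ∈ Finset.Ico n m, (((k:ℝ)+2)/((k:ℝ)+1)) * max ((k:ℝ)/((k:ℝ)+1)) (U k ω) := by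
      rw [← h2] at h3; linarith
    exact mul_le_mul_of_nonneg_left this htn.le
  -- pointwise identification of T with the product of truncated factors
  have hTFpt : ∀ ω, (∀ k, U k ω ∈ Set.Icc (0:ℝ) 1) → ∀ m, n ≤ m →
      T m ω = tn * (fidP n m * ∏ k ∈ Finset.Ico n m, fidG U k ω) := by
    intro ω hω m hm
    rw [hTprod m hm ω]
    have h1 : ∀ k ∈ Finset.Ico n m,
        (((k:ℝ)+2)/((k:ℝ)+1)) * max ((k:ℝ)/((k:ℝ)+1)) (U k ω) = fidF U k ω := by
      intro k _
      unfold fidF fidH fidC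
      have := (hω k).2
      rw [min_eq_right this]
    rw [Finset.prod_congr rfl h1]
    have h2 : ∀ k ∈ Finset.Ico n m, fidF U k ω = fidMu k * fidG U k ω := by
      intro k _
      unfold fidG
      field_simp [(fidMu_pos k).ne']
    rw [Finset.prod_congr rfl h2, Finset.prod_mul_distrib]
    rfl
  -- measurability and integrability of the building blocks
  have hFmeas : ∀ k, Measurable (fidF U k) := fun k => (fidH_meas k).comp (hUmeas k)
  have hGmeas : ∀ k, Measurable (fidG U k) := fun k => (hFmeas k).div_const _
  have hMmeas : ∀ m, Measurable (fidM U n m) := fun m =>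
    Finset.measurable_prod _ fun k _ => hGmeas k
  have hFmean : ∀ k, ∫ ω, fidF U k ω ∂P = fidMu k := by
    intro k
    have h1 : ∫ ω, fidF U k ω ∂P = ∫ x, fidH k x ∂(Measure.map (U k) P) :=
      (integral_map (hUmeas k).aemeasurable (fidH_meas k).aestronglyMeasurable).symm
    rw [h1, hdist k]
    have h2 : ∫ x in Set.Icc (0:ℝ) 1, fidH k x =
        ∫ x in Set.Icc (0:ℝ) 1, (((k:ℝ)+2)/((k:ℝ)+1)) * max (fidC k) x := by
      refine setIntegral_congr_fun measurableSet_Icc fun x hx => ?_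
      unfold fidH
      rw [min_eq_right hx.2]
    rw [h2, integral_const_mul, aux_max_integral (fidC_nonneg k) (fidC_le_one k)]
    rfl
  have hFintg : ∀ k, Integrable (fidF U k) P := by
    intro k
    refine Integrable.mono' (integrable_const (2:ℝ)) (hFmeas k).aestronglyMeasurable ?_
    refine ae_of_all _ fun ω => ?_
    rw [Real.norm_eq_abs, abs_of_nonneg (fidF_nonneg U k ω)]
    exact fidF_ub U k ω
  have hGintg : ∀ k, Integrable (fidG U k) P := fun k => (hFintg k).div_const _
  have hGmean : ∀ k, ∫ ω, fidG U k ω ∂P = 1 := by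
    intro k
    unfold fidG
    rw [integral_div, hFmean k, div_self (fidMu_pos k).ne']
  have hMint : ∀ m, Integrable (fidM U n m) P := by
    intro m
    refine Integrable.mono' (integrable_const ((4:ℝ)^(m+1))) (hMmeas m).aestronglyMeasurable ?_
    refine ae_of_all _ fun ω => ?_
    rw [Real.norm_eq_abs, abs_of_nonneg (fidM_nonneg U n m ω)]
    exact fidM_le U n m ω
  -- the natural filtration
  have hUsm : ∀ i, StronglyMeasurable (U i) := fun i => (hUmeas i).stronglyMeasurable
  set ℱ : Filtration ℕ m0 := Filtration.natural U hUsm with hℱ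
  have hGsm : ∀ k, StronglyMeasurable[MeasurableSpace.comap (U k) inferInstance] (fidG U k) := by
    intro k
    have hmeasH : Measurable fun x : ℝ => fidH k x / fidMu k := (fidH_meas k).div_const _
    exact (hmeasH.comp (comap_measurable (U k))).stronglyMeasurable
  have hcomap_le : ∀ k m : ℕ, k ≤ m →
      MeasurableSpace.comap (U k) inferInstance ≤ ℱ m := by
    intro k m hk
    rw [hℱ]
    exact le_iSup_of_le k (le_iSup_of_le hk le_rfl)
  have hMadp : StronglyAdapted ℱ (fidM U n) := by
    intro m
    refine Measurable.stronglyMeasurable ?_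
    refine Finset.measurable_prod _ fun k hk => ?_
    have hkm : k ≤ m := by have := (Finset.mem_Ico.mp hk).2; omega
    exact ((hGsm k).measurable).mono (hcomap_le k m hkm) le_rfl
  have hIndepF : ∀ m : ℕ, Indep (MeasurableSpace.comap (U (m+1)) inferInstance) (ℱ m) P := by
    intro m
    exact iIndepFun.indep_comap_natural_of_lt hUsm hindep (Nat.lt_succ_self m)
  have hcond : ∀ m : ℕ, P[fidG U (m+1)| ℱ m] =ᵐ[P] fun _ => 1 := by
    intro m
    have h := condExp_indep_eq (μ := P) (hUmeas (m+1)).comap_le (ℱ.le m)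
      (hGsm (m+1)) (hIndepF m)
    rw [hGmean (m+1)] at h
    exact h
  have hstep : ∀ m : ℕ, fidM U n m =ᵐ[P] P[fidM U n (m+1)| ℱ m] := by
    intro m
    by_cases hc : n ≤ m + 1
    · have hsplit : fidM U n (m+1) = fidM U n m * fidG U (m+1) := by
        funext ω
        show (∏ k ∈ Finset.Ico n (m+1+1), fidG U k ω) = _
        rw [Finset.prod_Ico_succ_top hc]
        rfl
      have hint1 : Integrable (fidM U n m * fidG U (m+1)) P := by
        rw [← hsplit]; exact hMint (m+1)
      have h1 : P[fidM U n m * fidG U (m+1)| ℱ m] =ᵐ[P]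
          fidM U n m * P[fidG U (m+1)| ℱ m] :=
        condExp_mul_of_stronglyMeasurable_left (hMadp m) hint1 (hGintg (m+1))
      have h2 : fidM U n m * P[fidG U (m+1)| ℱ m] =ᵐ[P] fidM U n m := by
        filter_upwards [hcond m] with ω hω
        show fidM U n m ω * _ = fidM U n m ω
        rw [hω, mul_one]
      rw [hsplit]
      exact ((h1.trans h2).symm)
    · have he1 : fidM U n m = fun _ : Ω => (1:ℝ) := by
        funext ω
        show (∏ k ∈ Finset.Ico n (m+1), fidG U k ω) = 1
        rw [Finset.Ico_eq_empty (by omega), Finset.prod_empty]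
      have he2 : fidM U n (m+1) = fun _ : Ω => (1:ℝ) := by
        funext ω
        show (∏ k ∈ Finset.Ico n (m+1+1), fidG U k ω) = 1
        rw [Finset.Ico_eq_empty (by omega), Finset.prod_empty]
      rw [he1, he2]
      exact Filter.EventuallyEq.symm (Filter.EventuallyEq.of_eq (condExp_const (μ := P) (ℱ.le m) (1:ℝ)))
  have hMart : Martingale (fidM U n) ℱ P := martingale_nat hMadp hMint hstep
  have hMmean : ∀ m, ∫ ω, fidM U n m ω ∂P = 1 := by
    intro m
    have h0 : fidM U n 0 = fun _ : Ω => (1:ℝ) := by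
      funext ω
      show (∏ k ∈ Finset.Ico n 1, fidG U k ω) = 1
      rw [Finset.Ico_eq_empty (by omega), Finset.prod_empty]
    calc ∫ ω, fidM U n m ω ∂P = ∫ ω, (P[fidM U n m| ℱ 0]) ω ∂P :=
          (integral_condExp (ℱ.le 0)).symm
      _ = ∫ ω, fidM U n 0 ω ∂P := integral_congr_ae (hMart.condExp_ae_eq (Nat.zero_le m))
      _ = 1 := by rw [h0]; simp
  have heLp : ∀ m, eLpNorm (fidM U n m) 1 P ≤ ((1:ℝ≥0) : ℝ≥0∞) := by
    intro m
    rw [eLpNorm_one_eq_lintegral_enorm]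
    have h1 : ∫⁻ ω, ‖fidM U n m ω‖ₑ ∂P = ∫⁻ ω, ENNReal.ofReal (fidM U n m ω) ∂P := by
      refine lintegral_congr fun ω => ?_
      rw [← Real.enorm_eq_ofReal (fidM_nonneg U n m ω)]
    rw [h1, ← ofReal_integral_eq_lintegral_ofReal (hMint m)
      (ae_of_all _ (fun ω => fidM_nonneg U n m ω)), hMmean m]
    simp
  have hMconv : ∀ᵐ ω ∂P, ∃ l, Tendsto (fun m => fidM U n m ω) atTop (𝓝 l) :=
    hMart.submartingale.exists_ae_tendsto_of_bdd heLp
  -- the deterministic product limit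
  set Q : ℕ → ℝ := fun m => ∏ k ∈ Finset.Ico n m, fidR k with hQ
  have hQmono : Monotone Q := by
    refine monotone_nat_of_le_succ fun m => ?_
    by_cases hc : n ≤ m
    · rw [hQ]
      simp only
      rw [Finset.prod_Ico_succ_top hc]
      have h1 := fidR_prod_nonneg n m hn
      have h2 := fidR_one_le m (le_trans hn hc)
      nlinarith
    · rw [hQ]
      simp only
      rw [Finset.Ico_eq_empty (by omega), Finset.Ico_eq_empty (by omega)]
  have hQbdd : ∀ m, Q m ≤ Real.exp (1/(2*(n:ℝ))) := by
    intro m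
    by_cases hc : n ≤ m
    · refine le_trans (fid_prodR_le n m hn hc) ?_
      apply Real.exp_le_exp.mpr
      have hm' : (1:ℝ) ≤ (m:ℝ) := le_trans hn' (by exact_mod_cast hc)
      have : (0:ℝ) ≤ 1/(2*(m:ℝ)) := by positivity
      linarith
    · rw [hQ]
      simp only
      rw [Finset.Ico_eq_empty (by omega), Finset.prod_empty]
      exact Real.one_le_exp (by positivity)
  set Qinf : ℝ := ⨆ m, Q m with hQinf
  have hQtend : Tendsto Q atTop (𝓝 Qinf) := by
    refine tendsto_atTop_ciSup hQmono ⟨Real.exp (1/(2*(n:ℝ))), ?_⟩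
    rintro x ⟨m, rfl⟩
    exact hQbdd m
  have hQinf_le : Qinf ≤ Real.exp (1/(2*(n:ℝ))) := ciSup_le hQbdd
  have hQinf_ge : 1 ≤ Qinf := by
    have h1 : Q n ≤ Qinf := le_ciSup ⟨Real.exp (1/(2*(n:ℝ))), by rintro x ⟨m, rfl⟩; exact hQbdd m⟩ n
    have h2 : Q n = 1 := by rw [hQ]; simp
    linarith
  have hfidP_eq : ∀ m, n ≤ m →
      fidP n m = (((n:ℝ)*((m:ℝ)+1))/(((n:ℝ)+1)*(m:ℝ))) * Q m := by
    intro m hm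
    have h1 : ∀ k ∈ Finset.Ico n m, fidMu k = fidD k * fidR k := fun k hk =>
      fidMu_eq k (le_trans hn (Finset.mem_Ico.mp hk).1)
    unfold fidP
    rw [Finset.prod_congr rfl h1, Finset.prod_mul_distrib, fid_prodD n m hn hm]
  have hAtend : Tendsto (fun m : ℕ => ((n:ℝ)*((m:ℝ)+1))/(((n:ℝ)+1)*(m:ℝ))) atTop
      (𝓝 ((n:ℝ)/((n:ℝ)+1))) := by
    have h1 : Tendsto (fun m : ℕ => ((n:ℝ)/((n:ℝ)+1)) * (1 + 1/(m:ℝ))) atTop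
        (𝓝 (((n:ℝ)/((n:ℝ)+1)) * (1 + 0))) := by
      exact Tendsto.const_mul _ (tendsto_const_nhds.add tendsto_one_div_atTop_nhds_zero_nat)
    rw [show ((n:ℝ)/((n:ℝ)+1)) * (1 + 0) = (n:ℝ)/((n:ℝ)+1) by ring] at h1
    refine h1.congr' ?_
    filter_upwards [eventually_ge_atTop 1] with m hm
    have hm' : (1:ℝ) ≤ (m:ℝ) := by exact_mod_cast hm
    have h2 : (m:ℝ) ≠ 0 := by linarith
    have h3 : (n:ℝ)+1 ≠ 0 := by linarith
    field_simp
  have hPtend : Tendsto (fun m => fidP n m) atTop (𝓝 ((n:ℝ)/((n:ℝ)+1) * Qinf)) := by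
    refine (hAtend.mul hQtend).congr' ?_
    filter_upwards [eventually_ge_atTop n] with m hm
    exact (hfidP_eq m hm).symm
  -- the limit random variable
  set Tlim : Ω → ℝ := fun ω => max c0 (liminf (fun m => T (m+n) ω) atTop) with hTlim
  have hTlim_nonneg : ∀ ω, 0 ≤ Tlim ω := fun ω => le_trans hc0pos.le (le_max_left _ _)
  have hTlim_pos : ∀ ω, 0 < Tlim ω := fun ω => lt_of_lt_of_le hc0pos (le_max_left _ _)
  -- a.e. convergence
  have haeTend : ∀ᵐ ω ∂P, Tendsto (fun m => T m ω) atTop (𝓝 (Tlim ω)) := by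
    filter_upwards [hU01, hMconv] with ω hω hMc
    obtain ⟨l, hl⟩ := hMc
    have h2 : Tendsto (fun m => ∏ k ∈ Finset.Ico n m, fidG U k ω) atTop (𝓝 l) := by
      rw [← tendsto_add_atTop_iff_nat 1]
      exact hl
    have hLtend : Tendsto (fun m => T m ω) atTop
        (𝓝 (tn * ((n:ℝ)/((n:ℝ)+1) * Qinf * l))) := by
      have hb : Tendsto (fun m => tn * (fidP n m * ∏ k ∈ Finset.Ico n m, fidG U k ω)) atTop
          (𝓝 (tn * ((n:ℝ)/((n:ℝ)+1) * Qinf * l))) := by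
        exact Tendsto.const_mul _ (hPtend.mul h2)
      refine hb.congr' ?_
      filter_upwards [eventually_ge_atTop n] with m hm
      exact (hTFpt ω hω m hm).symm
    have hshift : Tendsto (fun m => T (m+n) ω) atTop
        (𝓝 (tn * ((n:ℝ)/((n:ℝ)+1) * Qinf * l))) :=
      hLtend.comp (tendsto_add_atTop_nat n)
    have hLge : c0 ≤ tn * ((n:ℝ)/((n:ℝ)+1) * Qinf * l) := by
      refine ge_of_tendsto hLtend ?_
      filter_upwards [eventually_ge_atTop n] with m hm
      exact hTlb m hm ω
    have hTlim_eq : Tlim ω = tn * ((n:ℝ)/((n:ℝ)+1) * Qinf * l) := by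
      rw [hTlim]
      simp only
      rw [hshift.liminf_eq]
      exact max_eq_right hLge
    rw [hTlim_eq]
    exact hLtend
  -- measurability of T and Tlim
  have hTmeas' : ∀ m, Measurable (fun ω => T (m+n) ω) := by
    intro m
    have he : (fun ω => T (m+n) ω) = fun ω =>
        tn * ∏ k ∈ Finset.Ico n (m+n), (((k:ℝ)+2)/((k:ℝ)+1)) * max ((k:ℝ)/((k:ℝ)+1)) (U k ω) :=
      funext fun ω => hTprod (m+n) (Nat.le_add_left n m) ω
    rw [he]
    exact (Finset.measurable_prod _ fun k _ =>
      (measurable_const.max (hUmeas k)).const_mul _).const_mul _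
  have hTlimMeas : Measurable Tlim := by
    rw [hTlim]
    exact measurable_const.max (Measurable.liminf hTmeas')
  -- integral of T m
  have hTim : ∀ m, n ≤ m → Integrable (T m) P ∧ ∫ ω, T m ω ∂P = tn * fidP n m := by
    intro m hm
    obtain ⟨j, rfl⟩ : ∃ j, m = j + 1 := ⟨m - 1, by omega⟩
    have hae : T (j+1) =ᵐ[P] fun ω => tn * (fidP n (j+1) * fidM U n j ω) := by
      filter_upwards [hU01] with ω hω
      exact hTFpt ω hω (j+1) hm
    constructor
    · exact Integrable.congr (((hMint j).const_mul (fidP n (j+1))).const_mul tn) hae.symm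
    · rw [integral_congr_ae hae, integral_const_mul, integral_const_mul, hMmean j, mul_one]
  -- Fatou argument
  have hval : ∀ m, ∫⁻ ω, ENNReal.ofReal (T (m+n) ω) ∂P = ENNReal.ofReal (tn * fidP n (m+n)) := by
    intro m
    have h := hTim (m+n) (Nat.le_add_left n m)
    rw [← ofReal_integral_eq_lintegral_ofReal h.1
      (ae_of_all _ fun ω => le_trans hc0pos.le (hTlb (m+n) (Nat.le_add_left n m) ω)), h.2]
  have hkey : ∫⁻ ω, ENNReal.ofReal (Tlim ω) ∂P ≤
      ENNReal.ofReal (tn * ((n:ℝ)/((n:ℝ)+1)) * Real.exp (1/(2*(n:ℝ)))) := by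
    have hmeas : ∀ m, Measurable fun ω => ENNReal.ofReal (T (m+n) ω) := fun m =>
      ENNReal.measurable_ofReal.comp (hTmeas' m)
    have hae2 : ∀ᵐ ω ∂P, ENNReal.ofReal (Tlim ω) =
        liminf (fun m => ENNReal.ofReal (T (m+n) ω)) atTop := by
      filter_upwards [haeTend] with ω hω
      exact ((ENNReal.tendsto_ofReal (hω.comp (tendsto_add_atTop_nat n))).liminf_eq).symm
    calc ∫⁻ ω, ENNReal.ofReal (Tlim ω) ∂P
        = ∫⁻ ω, liminf (fun m => ENNReal.ofReal (T (m+n) ω)) atTop ∂P :=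
          lintegral_congr_ae hae2
      _ ≤ liminf (fun m => ∫⁻ ω, ENNReal.ofReal (T (m+n) ω) ∂P) atTop :=
          lintegral_liminf_le hmeas
      _ = liminf (fun m => ENNReal.ofReal (tn * fidP n (m+n))) atTop := by
          simp only [hval]
      _ ≤ liminf (fun m => ENNReal.ofReal
            (tn * (((n:ℝ)*(((m+n:ℕ):ℝ)+1))/(((n:ℝ)+1)*((m+n:ℕ):ℝ)) * Real.exp (1/(2*(n:ℝ)))))) atTop := by
          refine Filter.liminf_le_liminf (Filter.Eventually.of_forall fun m => ?_)
          apply ENNReal.ofReal_le_ofReal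
          have hQle := hQbdd (m+n)
          have hAnn : (0:ℝ) ≤ ((n:ℝ)*(((m+n:ℕ):ℝ)+1))/(((n:ℝ)+1)*((m+n:ℕ):ℝ)) := by positivity
          have h1 : fidP n (m+n) ≤
              ((n:ℝ)*(((m+n:ℕ):ℝ)+1))/(((n:ℝ)+1)*((m+n:ℕ):ℝ)) * Real.exp (1/(2*(n:ℝ))) := by
            rw [hfidP_eq (m+n) (Nat.le_add_left n m)]
            exact mul_le_mul_of_nonneg_left hQle hAnn
          exact mul_le_mul_of_nonneg_left h1 htn.le
      _ ≤ ENNReal.ofReal (tn * ((n:ℝ)/((n:ℝ)+1)) * Real.exp (1/(2*(n:ℝ)))) := by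
          have hreal : Tendsto (fun m : ℕ =>
              tn * (((n:ℝ)*(((m+n:ℕ):ℝ)+1))/(((n:ℝ)+1)*((m+n:ℕ):ℝ)) * Real.exp (1/(2*(n:ℝ)))))
              atTop (𝓝 (tn * ((n:ℝ)/((n:ℝ)+1) * Real.exp (1/(2*(n:ℝ)))))) := by
            exact Tendsto.const_mul _ (Tendsto.mul_const _ (hAtend.comp (tendsto_add_atTop_nat n)))
          have := (ENNReal.tendsto_ofReal hreal).liminf_eq
          rw [this]
          apply ENNReal.ofReal_le_ofReal
          rw [mul_assoc]
  -- integrability of Tlim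
  have hTlimInt : Integrable Tlim P := by
    constructor
    · exact hTlimMeas.aestronglyMeasurable
    · rw [hasFiniteIntegral_iff_norm]
      have h1 : ∫⁻ ω, ENNReal.ofReal ‖Tlim ω‖ ∂P = ∫⁻ ω, ENNReal.ofReal (Tlim ω) ∂P := by
        refine lintegral_congr fun ω => ?_
        rw [Real.norm_eq_abs, abs_of_nonneg (hTlim_nonneg ω)]
      rw [h1]
      exact lt_of_le_of_lt hkey ENNReal.ofReal_lt_top
  refine ⟨Tlim, ?_, ?_, ?_⟩
  · filter_upwards [haeTend] with ω hω
    exact ⟨hω, hTlim_pos ω⟩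
  · have h1 : ∫ ω, (fun _ : Ω => c0) ω ∂P ≤ ∫ ω, Tlim ω ∂P :=
      integral_mono (integrable_const c0) hTlimInt (fun ω => le_max_left _ _)
    rw [integral_const] at h1
    simpa using h1
  · have h1 : ENNReal.ofReal (∫ ω, Tlim ω ∂P) = ∫⁻ ω, ENNReal.ofReal (Tlim ω) ∂P :=
      ofReal_integral_eq_lintegral_ofReal hTlimInt (ae_of_all _ hTlim_nonneg)
    have h2 : ENNReal.ofReal (∫ ω, Tlim ω ∂P) ≤
        ENNReal.ofReal (tn * ((n:ℝ)/((n:ℝ)+1)) * Real.exp (1/(2*(n:ℝ)))) := h1 ▸ hkey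
    have h3 : (0:ℝ) ≤ tn * ((n:ℝ)/((n:ℝ)+1)) * Real.exp (1/(2*(n:ℝ))) := by positivity
    exact (ENNReal.ofReal_le_ofReal_iff h3).mp h2
end
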